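/- arXiv:2301.09944 — 19 statements merged into one kernel-verified Lean document; each statement's English description precedes it below -/
import Mathlib

section
/- Let S be a Clifford semigroup and s a solution of the pentagon equation on S, given by s(a,b) = (a·b, θ_a(b)). Then for every a ∈ S one has θ_a(a⁻¹) = (θ_{a·a⁻¹}(a))⁻¹. -/
/-- Clifford semigroup: semigroup with inversion `inv` such that
`a * inv a * a = a`, `inv a * a * inv a = inv a`, `a * inv a = inv a * a`,
and every idempotent is central.
A solution of the pentagon equation is given by `θ` satisfying (P1) and (P2). -/
theorem pentagon_clifford_theta_inv
    {S : Type*} [Semigroup S] (inv : S → S)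
    (hinv1 : ∀ a : S, a * inv a * a = a)
    (hinv2 : ∀ a : S, inv a * a * inv a = inv a)
    (hinvcomm : ∀ a : S, a * inv a = inv a * a)
    (hcentral : ∀ e : S, e * e = e → ∀ a : S, e * a = a * e)
    (θ : S → S → S)
    (P1 : ∀ a b c : S, θ a b * θ (a * b) c = θ a (b * c))
    (P2 : ∀ a b c : S, θ (θ a b) (θ (a * b) c) = θ b c) :
    ∀ a : S, θ a (inv a) = inv (θ (a * inv a) a) := by
  -- uniqueness of inverses when idempotents are central
  have key : ∀ v x y : S, x * v * x = x → v * x * v = v →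
      y * v * y = y → v * y * v = v → x = y := by
    intro v x y hx hvx hy hvy
    have hxv : (x * v) * (x * v) = x * v := by
      calc (x * v) * (x * v) = x * (v * x * v) := by simp only [mul_assoc]
      _ = x * v := by rw [hvx]
    have hyv : (y * v) * (y * v) = y * v := by
      calc (y * v) * (y * v) = y * (v * y * v) := by simp only [mul_assoc]
      _ = y * v := by rw [hvy]
    have hvx' : (v * x) * (v * x) = v * x := by
      calc (v * x) * (v * x) = (v * x * v) * x := by simp only [mul_assoc]
      _ = v * x := by rw [hvx]
    have h1 : x = y * v * x := by
      calc x = x * v * x := hx.symm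
      _ = x * (v * y * v) * x := by rw [hvy]
      _ = ((x * v) * (y * v)) * x := by simp only [mul_assoc]
      _ = ((y * v) * (x * v)) * x := by rw [hcentral (x * v) hxv (y * v)]
      _ = (y * v) * (x * v * x) := by simp only [mul_assoc]
      _ = y * v * x := by rw [hx]
    have h2 : y = y * v * x := by
      calc y = y * v * y := hy.symm
      _ = y * (v * x * v) * y := by rw [hvx]
      _ = y * ((v * x) * (v * y)) := by simp only [mul_assoc]
      _ = y * ((v * y) * (v * x)) := by rw [hcentral (v * x) hvx' (v * y)]
      _ = (y * v * y) * (v * x) := by simp only [mul_assoc]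
      _ = y * (v * x) := by rw [hy]
      _ = y * v * x := by rw [mul_assoc]
    exact h1.trans h2.symm
  intro a
  set e := a * inv a with he_def
  have he : e * e = e := by
    calc e * e = (a * inv a * a) * inv a := by simp only [he_def, mul_assoc]
    _ = e := by rw [hinv1]
  have hea : e * a = a := hinv1 a
  have hae : a * e = a := by rw [← hcentral e he a]; exact hea
  have hei : e * inv a = inv a := by
    rw [he_def, hinvcomm]; exact hinv2 a
  set u := θ a (inv a) with hu_def
  set v := θ e a with hv_def
  -- u * v = θ a e
  have h1 : u * v = θ a e := by
    have := P1 a (inv a) a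
    rw [← hinvcomm] at this
    exact this
  -- θ a e * u = u
  have h2 : θ a e * u = u := by
    have := P1 a e (inv a)
    rw [hae, hei] at this
    exact this
  have huvu : u * v * u = u := by rw [h1, h2]
  -- v * u = θ e e
  have h3 : v * u = θ e e := by
    have := P1 e a (inv a)
    rw [hea] at this
    exact this
  -- θ e e * v = v
  have h4 : θ e e * v = v := by
    have := P1 e e a
    rw [he, hea] at this
    exact this
  have hvuv : v * u * v = v := by rw [h3, h4]
  exact key v u (inv v) huvu hvuv (hinv2 v) (hinv1 v)
end

section
/- Let S be a Clifford semigroup and s a solution on S. Then for every a ∈ S one has θ_a(a⁻¹·a) = θ_a(a⁻¹)·(θ_a(a⁻¹))⁻¹; in particular θ_a(a⁻¹·a) is an idempotent of S. -/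
/-- Clifford semigroup: semigroup with inversion `inv` such that
`a * inv a * a = a`, `inv a * a * inv a = inv a`, `a * inv a = inv a * a`,
and every idempotent is central.
A solution of the pentagon equation is given by `θ` satisfying (P1) and (P2). -/
theorem pentagon_clifford_theta_inv_mul_idempotent
    {S : Type*} [Semigroup S] (inv : S → S)
    (hinv1 : ∀ a : S, a * inv a * a = a)
    (hinv2 : ∀ a : S, inv a * a * inv a = inv a)
    (hinvcomm : ∀ a : S, a * inv a = inv a * a)
    (hcentral : ∀ e : S, e * e = e → ∀ a : S, e * a = a * e)
    (θ : S → S → S)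
    (P1 : ∀ a b c : S, θ a b * θ (a * b) c = θ a (b * c))
    (P2 : ∀ a b c : S, θ (θ a b) (θ (a * b) c) = θ b c) :
    ∀ a : S, θ a (inv a * a) = θ a (inv a) * inv (θ a (inv a)) ∧
      θ a (inv a * a) * θ a (inv a * a) = θ a (inv a * a) := by
  intro a
  have hae : a * (inv a * a) = a := by rw [← mul_assoc, hinv1]
  have hee : (inv a * a) * (inv a * a) = inv a * a := by
    rw [mul_assoc, hae]
  set x := θ a (inv a * a) with hxdef
  set y := θ a (inv a) with hydef
  set z := θ (a * inv a) a with hzdef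
  -- x is idempotent
  have hxx : x * x = x := by
    have := P1 a (inv a * a) (inv a * a)
    rwa [hae, hee] at this
  -- x = y * z
  have hx_yz : x = y * z := by
    have := P1 a (inv a) a
    rw [this]
  -- x * y = y
  have hxy : x * y = y := by
    have := P1 a (inv a * a) (inv a)
    rwa [hae, mul_assoc, ← mul_assoc (inv a), hinv2] at this
  set f := y * inv y with hfdef
  have hff : f * f = f := by
    rw [hfdef, mul_assoc y (inv y), ← mul_assoc (inv y) y, hinv2]
  have hfx : f * x = x := by
    rw [hfdef, hx_yz, ← mul_assoc, hinv1]
  have hxf : x * f = f := by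
    rw [hfdef, ← mul_assoc, hxy]
  have hxef : x = f := by
    calc x = f * x := hfx.symm
    _ = x * f := (hcentral x hxx f).symm
    _ = f := hxf
  exact ⟨hxef, hxx⟩
end

section
/- Let S be a Clifford semigroup, s a solution on S, a ∈ S and e ∈ E(S). If a ≤ e (i.e. a·a⁻¹ = a·a⁻¹·e), then θ_a(e) is an idempotent of S. -/
/-- Clifford semigroup: semigroup with inversion `inv` such that
`a * inv a * a = a`, `inv a * a * inv a = inv a`, `a * inv a = inv a * a`,
and every idempotent is central.
A solution of the pentagon equation is given by `θ` satisfying (P1) and (P2). -/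
theorem pentagon_clifford_theta_idem_of_le
    {S : Type*} [Semigroup S] (inv : S → S)
    (hinv1 : ∀ a : S, a * inv a * a = a)
    (hinv2 : ∀ a : S, inv a * a * inv a = inv a)
    (hinvcomm : ∀ a : S, a * inv a = inv a * a)
    (hcentral : ∀ e : S, e * e = e → ∀ a : S, e * a = a * e)
    (θ : S → S → S)
    (P1 : ∀ a b c : S, θ a b * θ (a * b) c = θ a (b * c))
    (P2 : ∀ a b c : S, θ (θ a b) (θ (a * b) c) = θ b c)
    (a e : S) (he : e * e = e) (hle : a * inv a = a * inv a * e) :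
    θ a e * θ a e = θ a e := by
  have hae : a * e = a := by
    conv_rhs => rw [← hinv1 a, hle]
    rw [mul_assoc (a * inv a) e a, hcentral e he a, ← mul_assoc, hinv1]
  have := P1 a e e
  rw [hae, he] at this
  exact this
end

section
/- Let S be a Clifford semigroup, s a solution on S with kernel K, a ∈ S, k ∈ K, and e ∈ E(S) such that e ≤ a and e ≤ k. Then θ_{e·a}(k) is an idempotent of S. -/
/- Clifford semigroup: semigroup with inversion `inv` such that
`a * inv a * a = a`, `inv a * a * inv a = inv a`, `a * inv a = inv a * a`,
and every idempotent is central.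
A solution of the pentagon equation is given by `θ` satisfying (P1) and (P2). -/
/-- Membership in the kernel of a solution: `θ e a` is idempotent for every
idempotent `e` with `e ≤ a`, i.e. `e = e * a * inv a`. -/
def InKernel {S : Type*} [Semigroup S] (inv : S → S) (θ : S → S → S) (a : S) : Prop :=
  ∀ e : S, e * e = e → e = e * a * inv a → θ e a * θ e a = θ e a

set_option maxHeartbeats 1000000 in
theorem pentagon_clifford_theta_ea_idem
    {S : Type*} [Semigroup S] (inv : S → S)
    (hinv1 : ∀ a : S, a * inv a * a = a)
    (hinv2 : ∀ a : S, inv a * a * inv a = inv a)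
    (hinvcomm : ∀ a : S, a * inv a = inv a * a)
    (hcentral : ∀ e : S, e * e = e → ∀ a : S, e * a = a * e)
    (θ : S → S → S)
    (P1 : ∀ a b c : S, θ a b * θ (a * b) c = θ a (b * c))
    (P2 : ∀ a b c : S, θ (θ a b) (θ (a * b) c) = θ b c)
    (a k e : S) (hk : InKernel inv θ k)
    (he : e * e = e) (hea : e = e * a * inv a) (hek : e = e * k * inv k) :
    θ (e * a) k * θ (e * a) k = θ (e * a) k := by
  have hg1 := hinv1 a
  have hg2 := hinv2 a
  have hg3 := hinvcomm a
  have hg4 := hinv1 k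
  have hg5 := hinv2 k
  have hg6 := hinvcomm k
  have h1 := P2 (inv a) ((e * a) * k) (inv k)
  have h2 := P1 (e * k) (inv k) k
  have h3 := mul_assoc (inv a) a k
  have h4 := mul_assoc (θ e k) (θ (e * k) (inv k)) (θ e (k * inv k))
  have h5 := mul_assoc (inv k) k (inv k)
  have h6 := mul_assoc (θ e k) (θ (e * k) (inv k)) (θ (e * k) (k * inv k))
  have h7 := P1 e (k * inv k) k
  have h8 := P1 (e * a) k (inv k)
  have h9 := mul_assoc (k * inv k) (e * k) (inv k)
  have h10 := P1 (e * a) (k * inv k) k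
  have h11 := mul_assoc (inv a * a) (e * k) (inv k)
  have h12 := P2 (inv a) ((e * a) * k) (k * inv k)
  have h13 := mul_assoc k (inv a * a) e
  have h14 := mul_assoc (inv a) e ((e * a) * k)
  have h15 := mul_assoc (e * k) (inv k) k
  have h16 := mul_assoc (θ (e * k) (k * inv k)) (θ (e * k) (inv k)) (θ e k)
  have h17 := P1 e k (inv k)
  have h18 := mul_assoc (θ (e * k) (inv k)) (θ e k) (θ e k)
  have h19 := P1 (e * a) k (k * inv k)
  have h20 := mul_assoc e e k
  have h21 := mul_assoc e (e * k) (inv a * a)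
  have h22 := mul_assoc (inv a * a) (inv a) a
  have h23 := mul_assoc e (inv a * a) (e * k)
  have h24 := mul_assoc k (inv k) k
  have h25 := mul_assoc e a k
  have h26 := mul_assoc (inv k) k (k * inv k)
  have h27 := mul_assoc e (e * a) k
  have h28 := mul_assoc e k (inv k)
  have h29 := mul_assoc (θ e (k * inv k)) (θ (e * k) (inv k)) (θ e k)
  have h30 := mul_assoc (inv a) (a * k) e
  have h31 := mul_assoc (k * inv k) e (e * a)
  have h32 := mul_assoc e e a
  have h33 := mul_assoc e (inv a) ((e * a) * k)
  have h34 := mul_assoc e k e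
  have h35 := mul_assoc e a (inv a)
  have h36 := P1 (e * k) (inv k) (k * inv k)
  have h37 := mul_assoc (θ (e * k) (inv k)) (θ e k) (θ (e * k) (inv k))
  have h38i : e * e = e := by clear hk P1 P2 hcentral hinv1 hinv2 hinvcomm; grind
  have h38 := hcentral e h38i (e * k)
  have h39i : e * e = e := by clear hk P1 P2 hcentral hinv1 hinv2 hinvcomm; grind
  have h39 := hcentral e h39i (a * k)
  have h40i : (inv a * a) * (inv a * a) = (inv a * a) := by clear hk P1 P2 hcentral hinv1 hinv2 hinvcomm; grind
  have h40 := hcentral (inv a * a) h40i (e * k)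
  have h41i : e * e = e := by clear hk P1 P2 hcentral hinv1 hinv2 hinvcomm; grind
  have h41 := hcentral e h41i (inv a)
  have h42i : (k * inv k) * (k * inv k) = (k * inv k) := by clear hk P1 P2 hcentral hinv1 hinv2 hinvcomm; grind
  have h42 := hcentral (k * inv k) h42i (e * k)
  have h43i : (inv a * a) * (inv a * a) = (inv a * a) := by clear hk P1 P2 hcentral hinv1 hinv2 hinvcomm; grind
  have h43 := hcentral (inv a * a) h43i k
  have h44 := hk e (by clear hk P1 P2 hcentral hinv1 hinv2 hinvcomm; grind) (by clear hk P1 P2 hcentral hinv1 hinv2 hinvcomm; grind)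
  have h45i : (θ (e * k) (k * inv k)) * (θ (e * k) (k * inv k)) = (θ (e * k) (k * inv k)) := by clear hk P1 P2 hcentral hinv1 hinv2 hinvcomm; grind
  have h45 := hcentral (θ (e * k) (k * inv k)) h45i (θ (e * k) (inv k))
  have h46i : (k * inv k) * (k * inv k) = (k * inv k) := by clear hk P1 P2 hcentral hinv1 hinv2 hinvcomm; grind
  have h46 := hcentral (k * inv k) h46i (e * a)
  have h47i : (θ e (k * inv k)) * (θ e (k * inv k)) = (θ e (k * inv k)) := by clear hk P1 P2 hcentral hinv1 hinv2 hinvcomm; grind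
  have h47 := hcentral (θ e (k * inv k)) h47i (θ (e * k) (inv k))
  clear hk P1 P2 hcentral hinv1 hinv2 hinvcomm
  grind
end

section
/- Let S be a Clifford semigroup, s a solution on S, and a,b ∈ S with a ≤ b. Then θ_a(b·b⁻¹) is an idempotent, θ_a(b·b⁻¹) = θ_a(b)·(θ_a(b))⁻¹, and (θ_a(b))⁻¹ = θ_{a·b}(b⁻¹). -/
/-- Clifford semigroup: semigroup with inversion `inv` such that
`a * inv a * a = a`, `inv a * a * inv a = inv a`, `a * inv a = inv a * a`,
and every idempotent is central.
A solution of the pentagon equation is given by `θ` satisfying (P1) and (P2). -/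
theorem pentagon_clifford_theta_of_le
    {S : Type*} [Semigroup S] (inv : S → S)
    (hinv1 : ∀ a : S, a * inv a * a = a)
    (hinv2 : ∀ a : S, inv a * a * inv a = inv a)
    (hinvcomm : ∀ a : S, a * inv a = inv a * a)
    (hcentral : ∀ e : S, e * e = e → ∀ a : S, e * a = a * e)
    (θ : S → S → S)
    (P1 : ∀ a b c : S, θ a b * θ (a * b) c = θ a (b * c))
    (P2 : ∀ a b c : S, θ (θ a b) (θ (a * b) c) = θ b c)
    (a b : S) (hle : a * inv a = a * inv a * (b * inv b)) :
    θ a (b * inv b) * θ a (b * inv b) = θ a (b * inv b) ∧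
    θ a (b * inv b) = θ a b * inv (θ a b) ∧
    inv (θ a b) = θ (a * b) (inv b) := by
  -- `e := b * inv b` is a central idempotent
  have hee : (b * inv b) * (b * inv b) = b * inv b := by
    rw [← mul_assoc, hinv1]
  have hce := hcentral (b * inv b) hee
  -- basic absorption facts
  have hbe : b * (b * inv b) = b := by
    rw [← hce b, hinv1]
  have hib : (b * inv b) * inv b = inv b := by
    rw [hinvcomm b]; exact hinv2 b
  have hae : a * (b * inv b) = a := by
    calc a * (b * inv b) = (b * inv b) * a := (hce a).symm
      _ = (b * inv b) * (a * inv a * a) := by conv_lhs => rw [← hinv1 a]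
      _ = ((b * inv b) * (a * inv a)) * a := by rw [← mul_assoc]
      _ = ((a * inv a) * (b * inv b)) * a := by rw [hce (a * inv a)]
      _ = (a * inv a) * a := by rw [← hle]
      _ = a := hinv1 a
  -- abbreviations
  set x := θ a b with hx
  set y := θ (a * b) (inv b) with hy
  -- pentagon instances
  have hxy : x * y = θ a (b * inv b) := P1 a b (inv b)
  have hux : θ a (b * inv b) * x = x := by
    have h := P1 a (b * inv b) b
    rw [hae, hinv1] at h
    exact h
  have hyx : y * x = θ (a * b) (b * inv b) := by
    have h := P1 (a * b) (inv b) b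
    rw [mul_assoc a b (inv b), hae, ← hinvcomm b] at h
    exact h
  have hvy : θ (a * b) (b * inv b) * y = y := by
    have h := P1 (a * b) (b * inv b) (inv b)
    rw [mul_assoc a b (b * inv b), hbe, hib] at h
    exact h
  have hyxy : y * x * y = y := by rw [hyx, hvy]
  have hxyx : x * y * x = x := by rw [hxy, hux]
  -- idempotency of θ a (b * inv b)
  have huu : θ a (b * inv b) * θ a (b * inv b) = θ a (b * inv b) := by
    rw [← hxy, mul_assoc x y (x * y), ← mul_assoc y x y, hyxy]
  -- central idempotents associated with x
  have hexx : (inv x * x) * (inv x * x) = inv x * x := by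
    rw [← mul_assoc, hinv2]
  have hxxe : (x * inv x) * (x * inv x) = x * inv x := by
    rw [← mul_assoc, hinv1]
  have hcd := hcentral (inv x * x) hexx
  have hd := hcentral (x * inv x) hxxe
  -- step A : (inv x * x) * y = y
  have hA : (inv x * x) * y = y := by
    conv_lhs => rw [← hyxy]
    rw [← mul_assoc, hcd (y * x), mul_assoc y x (inv x * x),
      ← mul_assoc x (inv x) x, hinv1, hyxy]
  -- step B : inv x = y
  have h1 : x * inv x = (x * y) * (x * inv x) := by
    rw [← mul_assoc (x * y) x (inv x), hxyx]
  have hB : inv x = y := by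
    calc inv x = inv x * x * inv x := (hinv2 x).symm
      _ = inv x * (x * inv x) := by rw [mul_assoc]
      _ = inv x * ((x * y) * (x * inv x)) := by rw [← h1]
      _ = inv x * ((x * inv x) * (x * y)) := by rw [← hd (x * y)]
      _ = (inv x * x * inv x) * (x * y) := by
            rw [← mul_assoc (inv x) (x * inv x) (x * y), ← mul_assoc (inv x) x (inv x)]
      _ = inv x * (x * y) := by rw [hinv2]
      _ = (inv x * x) * y := by rw [← mul_assoc]
      _ = y := hA
  refine ⟨huu, ?_, hB⟩
  rw [hB]
  exact hxy.symm
end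

section
/- Let S be a Clifford semigroup and s a solution on S. Then the kernel K of s is a normal subsemigroup of S: E(S) ⊆ K, K is closed under multiplication, and a⁻¹·k·a ∈ K for every a ∈ S and k ∈ K. -/
section Aux
variable {S : Type*} [Semigroup S]

theorem pent_inv_unique (hcentral : ∀ e : S, e * e = e → ∀ a : S, e * a = a * e)
    (a x y : S) (h1 : a * x * a = a) (h2 : x * a * x = x)
    (h3 : a * y * a = a) (h4 : y * a * y = y) : x = y := by
  have hay : (a*y)*(a*y) = a*y := by
    calc (a*y)*(a*y) = (a*y*a)*y := by simp only [mul_assoc]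
    _ = a*y := by rw [h3]
  have hya : (y*a)*(y*a) = y*a := by
    calc (y*a)*(y*a) = (y*a*y)*a := by simp only [mul_assoc]
    _ = y*a := by rw [h4]
  have e1 : x = x*(a*y) := by
    calc x = (x*a)*x := h2.symm
    _ = (x*((a*y)*a))*x := by rw [h3]
    _ = (x*(a*y))*(a*x) := by simp only [mul_assoc]
    _ = x*((a*y)*(a*x)) := by rw [mul_assoc]
    _ = x*((a*x)*(a*y)) := by rw [hcentral _ hay (a*x)]
    _ = (x*(a*x))*(a*y) := by simp only [mul_assoc]
    _ = x*(a*y) := by rw [show x*(a*x) = x by rw [← mul_assoc]; exact h2]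
  have e2 : y = x*(a*y) := by
    calc y = (y*a)*y := h4.symm
    _ = (y*((a*x)*a))*y := by rw [h1]
    _ = (y*a)*((x*a)*y) := by simp only [mul_assoc]
    _ = ((y*a)*(x*a))*y := by rw [← mul_assoc]
    _ = ((x*a)*(y*a))*y := by rw [hcentral _ hya (x*a)]
    _ = (x*a)*((y*a)*y) := by rw [mul_assoc]
    _ = (x*a)*y := by rw [h4]
    _ = x*(a*y) := by rw [mul_assoc]
  rw [e1, ← e2]

variable (inv : S → S)
    (hinv1 : ∀ a : S, a * inv a * a = a)
    (hinv2 : ∀ a : S, inv a * a * inv a = inv a)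
    (hinvcomm : ∀ a : S, a * inv a = inv a * a)
    (hcentral : ∀ e : S, e * e = e → ∀ a : S, e * a = a * e)

include hinv1 hinv2 hcentral in
theorem pent_ideminv (e : S) (he : e * e = e) : inv e = e :=
  pent_inv_unique hcentral e (inv e) e (hinv1 e) (hinv2 e)
    (by rw [he, he]) (by rw [he, he])

include hinv1 hinv2 hcentral in
theorem pent_invinv (a : S) : inv (inv a) = a :=
  pent_inv_unique hcentral (inv a) (inv (inv a)) a (hinv1 (inv a)) (hinv2 (inv a))
    (hinv2 a) (hinv1 a)

include hinv1 hinv2 hcentral in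
theorem pent_invmul (a b : S) : inv (a * b) = inv b * inv a := by
  have hE : (b*inv b)*(b*inv b) = b*inv b := by
    calc (b*inv b)*(b*inv b) = (b*inv b*b)*inv b := by simp only [mul_assoc]
    _ = b*inv b := by rw [hinv1]
  refine pent_inv_unique hcentral (a*b) (inv (a*b)) (inv b * inv a)
    (hinv1 _) (hinv2 _) ?_ ?_
  · calc (a*b)*(inv b*inv a)*(a*b)
        = a*((b*inv b)*((inv a*a)*b)) := by simp only [mul_assoc]
    _ = a*(((b*inv b)*(inv a*a))*b) := by rw [← mul_assoc (b*inv b) (inv a*a) b]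
    _ = a*(((inv a*a)*(b*inv b))*b) := by rw [hcentral _ hE (inv a*a)]
    _ = a*((inv a*a)*((b*inv b)*b)) := by rw [mul_assoc (inv a*a) (b*inv b) b]
    _ = a*((inv a*a)*b) := by rw [show b*inv b*b = b from hinv1 b]
    _ = (a*(inv a*a))*b := by rw [← mul_assoc]
    _ = a*b := by rw [show a*(inv a*a) = a by rw [← mul_assoc]; exact hinv1 a]
  · calc (inv b*inv a)*(a*b)*(inv b*inv a)
        = inv b*((inv a*a)*((b*inv b)*inv a)) := by simp only [mul_assoc]
    _ = inv b*(((inv a*a)*(b*inv b))*inv a) := by rw [← mul_assoc (inv a*a) (b*inv b) (inv a)]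
    _ = inv b*(((b*inv b)*(inv a*a))*inv a) := by rw [← hcentral _ hE (inv a*a)]
    _ = inv b*((b*inv b)*((inv a*a)*inv a)) := by rw [mul_assoc (b*inv b) (inv a*a) (inv a)]
    _ = inv b*((b*inv b)*inv a) := by rw [show inv a*a*inv a = inv a from hinv2 a]
    _ = (inv b*(b*inv b))*inv a := by rw [← mul_assoc]
    _ = inv b*inv a := by rw [show inv b*(b*inv b) = inv b by rw [← mul_assoc]; exact hinv2 b]
end Aux

section Pent
variable {S : Type*} [Semigroup S] (inv : S → S)
    (hinv1 : ∀ a : S, a * inv a * a = a)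
    (hinv2 : ∀ a : S, inv a * a * inv a = inv a)
    (hinvcomm : ∀ a : S, a * inv a = inv a * a)
    (hcentral : ∀ e : S, e * e = e → ∀ a : S, e * a = a * e)
    (θ : S → S → S)
    (P1 : ∀ a b c : S, θ a b * θ (a * b) c = θ a (b * c))
    (P2 : ∀ a b c : S, θ (θ a b) (θ (a * b) c) = θ b c)

include hinvcomm hcentral P1 P2 in
theorem pent_lem29 (e k : S) (he : e * e = e) (hek : e * k * inv k = e)
    (hv : θ e k * θ e k = θ e k) : ∀ c, θ (e * k) c = θ e c := by
  intro c
  have hec : ∀ a, e * a = a * e := hcentral e he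
  have hk'g : inv k * (e * k) = e := by
    calc inv k * (e * k) = e * (inv k * k) := by rw [← mul_assoc, ← hec (inv k), mul_assoc]
    _ = e * (k * inv k) := by rw [← hinvcomm]
    _ = e := by rw [← mul_assoc]; exact hek
  have hge : (e * k) * e = e * k := by
    calc e * k * e = e * (e * k) := by rw [mul_assoc, ← hec k]
    _ = e * k := by rw [← mul_assoc, he]
  have heg : e * (e * k) = e * k := by rw [← mul_assoc, he]
  -- y = u * v
  have hy : θ e e * θ e k = θ e (e * k) := by
    have h := P1 e e k; rwa [he] at h
  -- x = θ (e*k) k' * y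
  have hx : θ (e*k) (inv k) * θ e (e*k) = θ (e*k) e := by
    have h := P1 (e*k) (inv k) (e*k)
    rwa [hek, hk'g] at h
  -- x * v = x
  have hxv : θ (e*k) e * θ e k = θ (e*k) e := by
    rw [← hx, ← hy]
    calc (θ (e*k) (inv k) * (θ e e * θ e k)) * θ e k
        = θ (e*k) (inv k) * (θ e e * (θ e k * θ e k)) := by simp only [mul_assoc]
    _ = θ (e*k) (inv k) * (θ e e * θ e k) := by rw [hv]
  -- v * x = y
  have hvx : θ e k * θ (e*k) e = θ e (e*k) := by
    have h := P1 e k e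
    rwa [← hec k] at h
  have hxy : θ (e*k) e = θ e (e*k) := by
    calc θ (e*k) e = θ (e*k) e * θ e k := hxv.symm
    _ = θ e k * θ (e*k) e := (hcentral _ hv _).symm
    _ = θ e (e*k) := hvx
  have h1 := P2 (e*k) e c
  rw [hge, hxy] at h1
  have h2 := P2 e (e*k) c
  rw [heg] at h2
  rw [h2] at h1
  exact h1

include hinv1 hinvcomm hcentral P1 P2 in
theorem pent_lem21 (p k : S) (hp : p * (k * inv k) = p)
    (hv : θ (inv p * p) k * θ (inv p * p) k = θ (inv p * p) k) :
    (∀ c, θ (p * k) c = θ p c) ∧ (θ p k * θ p k = θ p k) := by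
  have hge : (inv p * p) * (inv p * p) = inv p * p := by
    calc (inv p * p) * (inv p * p) = inv p * (p * inv p * p) := by simp only [mul_assoc]
    _ = inv p * p := by rw [hinv1]
  have hgk : (inv p * p) * k * inv k = inv p * p := by
    calc (inv p * p) * k * inv k = inv p * (p * (k * inv k)) := by simp only [mul_assoc]
    _ = inv p * p := by rw [hp]
  have h29 := pent_lem29 inv hinvcomm hcentral θ P1 P2 (inv p * p) k hge hgk hv
  have hvc : ∀ a, θ (inv p * p) k * a = a * θ (inv p * p) k := hcentral _ hv
  -- z * θ g (k * k') = z
  have hz1 : θ (inv p) p * θ (inv p * p) (k * inv k) = θ (inv p) p := by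
    have h := P1 (inv p) p (k * inv k); rwa [hp] at h
  have hv2 : θ (inv p * p) k * θ (inv p * p) (inv k) = θ (inv p * p) (k * inv k) := by
    have h := P1 (inv p * p) k (inv k); rwa [h29 (inv k)] at h
  have hzv : θ (inv p) p * θ (inv p * p) k = θ (inv p) p := by
    have step : θ (inv p) p * (θ (inv p * p) k * θ (inv p * p) (inv k)) = θ (inv p) p := by
      rw [hv2]; exact hz1
    calc θ (inv p) p * θ (inv p * p) k
        = (θ (inv p) p * (θ (inv p * p) k * θ (inv p * p) (inv k))) * θ (inv p * p) k := by
          rw [step]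
    _ = θ (inv p) p * (θ (inv p * p) k * (θ (inv p * p) (inv k) * θ (inv p * p) k)) := by
          simp only [mul_assoc]
    _ = θ (inv p) p * (θ (inv p * p) k * (θ (inv p * p) k * θ (inv p * p) (inv k))) := by
          rw [← hvc (θ (inv p * p) (inv k))]
    _ = θ (inv p) p * ((θ (inv p * p) k * θ (inv p * p) k) * θ (inv p * p) (inv k)) := by
          simp only [mul_assoc]
    _ = θ (inv p) p * (θ (inv p * p) k * θ (inv p * p) (inv k)) := by rw [hv]
    _ = θ (inv p) p := step
  constructor
  · intro c
    have hA := P2 (inv p) p c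
    have hB := P2 (inv p) (p * k) c
    have hpk : θ (inv p) (p * k) = θ (inv p) p := by
      have h := P1 (inv p) p k
      rw [hzv] at h
      exact h.symm
    rw [← mul_assoc, h29 c, hpk, hA] at hB
    exact hB.symm
  · have hA := P2 (inv p) p k
    have hsq := P1 (θ (inv p) p) (θ (inv p * p) k) (θ (inv p * p) k)
    rw [hzv, hv, hA] at hsq
    exact hsq

end Pent


theorem pentagon_clifford_kernel_normal_subsemigroup
    {S : Type*} [Semigroup S] (inv : S → S)
    (hinv1 : ∀ a : S, a * inv a * a = a)
    (hinv2 : ∀ a : S, inv a * a * inv a = inv a)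
    (hinvcomm : ∀ a : S, a * inv a = inv a * a)
    (hcentral : ∀ e : S, e * e = e → ∀ a : S, e * a = a * e)
    (θ : S → S → S)
    (P1 : ∀ a b c : S, θ a b * θ (a * b) c = θ a (b * c))
    (P2 : ∀ a b c : S, θ (θ a b) (θ (a * b) c) = θ b c) :
    (∀ e : S, e * e = e → InKernel inv θ e) ∧
    (∀ k h : S, InKernel inv θ k → InKernel inv θ h → InKernel inv θ (k * h)) ∧
    (∀ a k : S, InKernel inv θ k → InKernel inv θ (inv a * k * a)) := by
  have ideminv : ∀ e : S, e*e = e → inv e = e := pent_ideminv inv hinv1 hinv2 hcentral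
  have invinv : ∀ a : S, inv (inv a) = a := pent_invinv inv hinv1 hinv2 hcentral
  have invmul : ∀ a b : S, inv (a*b) = inv b * inv a := pent_invmul inv hinv1 hinv2 hcentral
  have lem21 := pent_lem21 inv hinv1 hinvcomm hcentral θ P1 P2
  refine ⟨?_, ?_, ?_⟩
  · -- idempotents are in the kernel
    intro f hf e he hle
    rw [ideminv f hf] at hle
    have hef : e * f = e := by
      conv_lhs => rw [hle]
      rw [mul_assoc (e*f) f f, hf]
      exact hle.symm
    have h := P1 e f f
    rw [hef, hf] at h
    exact h
  · -- closure under multiplication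
    intro k h hk hh e he hle
    rw [invmul k h] at hle
    have hKk : (k*inv k)*(k*inv k) = k*inv k := by
      calc (k*inv k)*(k*inv k) = (k*inv k*k)*inv k := by simp only [mul_assoc]
      _ = k*inv k := by rw [hinv1]
    have hHh : (h*inv h)*(h*inv h) = h*inv h := by
      calc (h*inv h)*(h*inv h) = (h*inv h*h)*inv h := by simp only [mul_assoc]
      _ = h*inv h := by rw [hinv1]
    have hle2 : e = e*((k*inv k)*(h*inv h)) := by
      calc e = e*(k*h)*(inv h*inv k) := hle
      _ = e*(k*((h*inv h)*inv k)) := by simp only [mul_assoc]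
      _ = e*(k*(inv k*(h*inv h))) := by rw [hcentral _ hHh (inv k)]
      _ = e*((k*inv k)*(h*inv h)) := by simp only [mul_assoc]
    have hek : e*(k*inv k) = e := by
      calc e*(k*inv k) = (e*((k*inv k)*(h*inv h)))*(k*inv k) := by rw [← hle2]
      _ = e*((k*inv k)*((h*inv h)*(k*inv k))) := by simp only [mul_assoc]
      _ = e*((k*inv k)*((k*inv k)*(h*inv h))) := by rw [hcentral _ hHh (k*inv k)]
      _ = e*(((k*inv k)*(k*inv k))*(h*inv h)) := by simp only [mul_assoc]
      _ = e*((k*inv k)*(h*inv h)) := by rw [hKk]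
      _ = e := hle2.symm
    have heh : e*(h*inv h) = e := by
      calc e*(h*inv h) = (e*((k*inv k)*(h*inv h)))*(h*inv h) := by rw [← hle2]
      _ = e*((k*inv k)*((h*inv h)*(h*inv h))) := by simp only [mul_assoc]
      _ = e*((k*inv k)*(h*inv h)) := by rw [hHh]
      _ = e := hle2.symm
    have hv : θ e k * θ e k = θ e k := hk e he (by rw [mul_assoc]; exact hek.symm)
    have hw : θ e h * θ e h = θ e h := hh e he (by rw [mul_assoc]; exact heh.symm)
    have hge : inv e * e = e := by rw [ideminv e he, he]
    have h21 := (lem21 e k hek (by rw [hge]; exact hv)).1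
    have hfac : θ e k * θ e h = θ e (k*h) := by
      have hh2 := P1 e k h; rwa [h21 h] at hh2
    rw [← hfac]
    calc (θ e k * θ e h) * (θ e k * θ e h)
        = θ e k * ((θ e h * θ e k) * θ e h) := by simp only [mul_assoc]
    _ = θ e k * ((θ e k * θ e h) * θ e h) := by rw [hcentral _ hw (θ e k)]
    _ = (θ e k * θ e k) * (θ e h * θ e h) := by simp only [mul_assoc]
    _ = θ e k * θ e h := by rw [hv, hw]
  · -- closure under conjugation
    intro a k hk e he hle
    have hb : inv (inv a * k * a) = inv a * (inv k * a) := by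
      rw [invmul (inv a * k) a, invmul (inv a) k, invinv a]
    rw [hb] at hle
    have hKk : (k*inv k)*(k*inv k) = k*inv k := by
      calc (k*inv k)*(k*inv k) = (k*inv k*k)*inv k := by simp only [mul_assoc]
      _ = k*inv k := by rw [hinv1]
    have hG : (a*inv a)*(a*inv a) = a*inv a := by
      calc (a*inv a)*(a*inv a) = (a*inv a*a)*inv a := by simp only [mul_assoc]
      _ = a*inv a := by rw [hinv1]
    have ha'a : (inv a*a)*(inv a*a) = inv a*a := by
      calc (inv a*a)*(inv a*a) = (inv a*a*inv a)*a := by simp only [mul_assoc]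
      _ = inv a*a := by rw [hinv2]
    have hle2 : e = e*((k*inv k)*(inv a*a)) := by
      calc e = e*(inv a*k*a)*(inv a*(inv k*a)) := hle
      _ = e*(inv a*(k*((a*inv a)*(inv k*a)))) := by simp only [mul_assoc]
      _ = e*(inv a*(k*(((a*inv a)*inv k)*a))) := by rw [← mul_assoc (a*inv a) (inv k) a]
      _ = e*(inv a*(k*((inv k*(a*inv a))*a))) := by rw [hcentral _ hG (inv k)]
      _ = e*(inv a*(k*(inv k*((a*inv a)*a)))) := by rw [mul_assoc (inv k) (a*inv a) a]
      _ = e*(inv a*(k*(inv k*a))) := by rw [show a*inv a*a = a from hinv1 a]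
      _ = e*(inv a*(k*inv k))*a := by simp only [mul_assoc]
      _ = e*((k*inv k)*inv a)*a := by rw [← hcentral _ hKk (inv a)]
      _ = e*((k*inv k)*(inv a*a)) := by simp only [mul_assoc]
    have hekk : e*(k*inv k) = e := by
      calc e*(k*inv k) = (e*((k*inv k)*(inv a*a)))*(k*inv k) := by rw [← hle2]
      _ = e*((k*inv k)*((inv a*a)*(k*inv k))) := by simp only [mul_assoc]
      _ = e*((k*inv k)*((k*inv k)*(inv a*a))) := by rw [← hcentral _ hKk (inv a*a)]
      _ = e*(((k*inv k)*(k*inv k))*(inv a*a)) := by simp only [mul_assoc]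
      _ = e*((k*inv k)*(inv a*a)) := by rw [hKk]
      _ = e := hle2.symm
    have hea : e*(inv a*a) = e := by
      calc e*(inv a*a) = (e*((k*inv k)*(inv a*a)))*(inv a*a) := by rw [← hle2]
      _ = e*((k*inv k)*((inv a*a)*(inv a*a))) := by simp only [mul_assoc]
      _ = e*((k*inv k)*(inv a*a)) := by rw [ha'a]
      _ = e := hle2.symm
    have hvK : θ e k * θ e k = θ e k := hk e he (by rw [mul_assoc]; exact hekk.symm)
    have hp : (e*inv a)*(k*inv k) = e*inv a := by
      calc (e*inv a)*(k*inv k) = e*(inv a*(k*inv k)) := by rw [mul_assoc]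
      _ = e*((k*inv k)*inv a) := by rw [← hcentral _ hKk (inv a)]
      _ = (e*(k*inv k))*inv a := by rw [← mul_assoc]
      _ = e*inv a := by rw [hekk]
    have hinvp : inv (e*inv a) = a*e := by rw [invmul e (inv a), invinv a, ideminv e he]
    have hg : inv (e*inv a)*(e*inv a) = e := by
      rw [hinvp]
      calc (a*e)*(e*inv a) = a*((e*e)*inv a) := by simp only [mul_assoc]
      _ = a*(e*inv a) := by rw [he]
      _ = (a*e)*inv a := by rw [← mul_assoc]
      _ = (e*a)*inv a := by rw [← hcentral e he a]
      _ = e*(a*inv a) := by rw [mul_assoc]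
      _ = e*(inv a*a) := by rw [hinvcomm]
      _ = e := hea
    have h2122 := lem21 (e*inv a) k hp (by rw [hg]; exact hvK)
    have h21 := h2122.1
    have hw : θ (e*inv a) k * θ (e*inv a) k = θ (e*inv a) k := h2122.2
    have F2 : θ (e*inv a) k * θ (e*inv a) a = θ (e*inv a) (k*a) := by
      have hh2 := P1 (e*inv a) k a; rwa [h21 a] at hh2
    have F3 : θ e (inv a) * θ (e*inv a) a = θ e (inv a*a) := P1 e (inv a) a
    have F1 : θ e (inv a) * θ (e*inv a) (k*a) = θ e (inv a*k*a) := by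
      have hh2 := P1 e (inv a) (k*a)
      rwa [← mul_assoc (inv a) k a] at hh2
    have hz2 : θ e (inv a*a) * θ e (inv a*a) = θ e (inv a*a) := by
      have hh2 := P1 e (inv a*a) (inv a*a)
      rwa [hea, ha'a] at hh2
    have hfac : θ e (inv a*k*a) = θ (e*inv a) k * θ e (inv a*a) := by
      calc θ e (inv a*k*a) = θ e (inv a) * θ (e*inv a) (k*a) := F1.symm
      _ = θ e (inv a) * (θ (e*inv a) k * θ (e*inv a) a) := by rw [F2]
      _ = (θ e (inv a) * θ (e*inv a) k) * θ (e*inv a) a := by rw [← mul_assoc]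
      _ = (θ (e*inv a) k * θ e (inv a)) * θ (e*inv a) a := by rw [← hcentral _ hw (θ e (inv a))]
      _ = θ (e*inv a) k * (θ e (inv a) * θ (e*inv a) a) := by rw [mul_assoc]
      _ = θ (e*inv a) k * θ e (inv a*a) := by rw [F3]
    rw [hfac]
    calc (θ (e*inv a) k * θ e (inv a*a)) * (θ (e*inv a) k * θ e (inv a*a))
        = θ (e*inv a) k * ((θ e (inv a*a) * θ (e*inv a) k) * θ e (inv a*a)) := by
          simp only [mul_assoc]
    _ = θ (e*inv a) k * ((θ (e*inv a) k * θ e (inv a*a)) * θ e (inv a*a)) := by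
          rw [hcentral _ hz2 (θ (e*inv a) k)]
    _ = (θ (e*inv a) k * θ (e*inv a) k) * (θ e (inv a*a) * θ e (inv a*a)) := by
          simp only [mul_assoc]
    _ = θ (e*inv a) k * θ e (inv a*a) := by rw [hw, hz2]
end

section
/- Let S be a Clifford semigroup and s a solution on S. Then s is commutative (i.e. (C1) a·c·b = a·b·c and (C2) θ_a = θ_{a·b} hold for all a,b,c ∈ S) if, and only if, S is a commutative semigroup and there exists a semigroup endomorphism γ of S with γ∘γ = γ such that θ_a = γ for every a ∈ S. -/
/- Clifford semigroup: semigroup with inversion `inv` such that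
`a * inv a * a = a`, `inv a * a * inv a = inv a`, `a * inv a = inv a * a`,
and every idempotent is central.
A solution of the pentagon equation is given by `θ` satisfying (P1) and (P2). -/
theorem pentagon_clifford_commutative_iff
    {S : Type*} [Semigroup S] (inv : S → S)
    (hinv1 : ∀ a : S, a * inv a * a = a)
    (hinv2 : ∀ a : S, inv a * a * inv a = inv a)
    (hinvcomm : ∀ a : S, a * inv a = inv a * a)
    (hcentral : ∀ e : S, e * e = e → ∀ a : S, e * a = a * e)
    (θ : S → S → S)
    (P1 : ∀ a b c : S, θ a b * θ (a * b) c = θ a (b * c))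
    (P2 : ∀ a b c : S, θ (θ a b) (θ (a * b) c) = θ b c) :
    ((∀ a b c : S, a * c * b = a * b * c) ∧ (∀ a b : S, θ a = θ (a * b))) ↔
      ((∀ a b : S, a * b = b * a) ∧
        ∃ γ : S → S, (∀ a b : S, γ (a * b) = γ a * γ b) ∧ γ ∘ γ = γ ∧
          ∀ a : S, θ a = γ) := by
  constructor
  · rintro ⟨h1, h2⟩
    have eidem : ∀ a : S, (a * inv a) * (a * inv a) = a * inv a := by
      intro a
      calc (a * inv a) * (a * inv a) = (a * inv a * a) * inv a := by
            rw [mul_assoc, mul_assoc, mul_assoc]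
        _ = a * inv a := by rw [hinv1]
    have ecent : ∀ a x : S, (a * inv a) * x = x * (a * inv a) := fun a =>
      hcentral _ (eidem a)
    have comm : ∀ a b : S, a * b = b * a := by
      intro a b
      calc a * b = (a * inv a * a) * b := by rw [hinv1]
        _ = (a * inv a) * (a * b) := by rw [mul_assoc]
        _ = (a * inv a) * b * a := by rw [← mul_assoc, h1 (a * inv a) a b]
        _ = b * (a * inv a) * a := by rw [ecent]
        _ = b * a := by rw [mul_assoc, hinv1]
    have θconst : ∀ a b : S, θ a = θ b := by
      intro a b
      rw [h2 a b, comm a b, ← h2 b a]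
    refine ⟨comm, fun x => θ x x, ?_, ?_, ?_⟩
    · intro a b
      show θ (a * b) (a * b) = θ a a * θ b b
      rw [θconst (a * b) a, ← P1 a a b, θconst (a * a) a, θconst b a]
    · funext x
      show θ (θ x x) (θ x x) = θ x x
      have h := P2 x x x
      rw [θconst (x * x) x] at h
      exact h
    · intro a
      funext b
      show θ a b = θ b b
      rw [θconst a b]
  · rintro ⟨hc, γ, hγ, hγγ, hθ⟩
    refine ⟨fun a b c => ?_, fun a b => ?_⟩
    · rw [mul_assoc, mul_assoc, hc c b]
    · rw [hθ a, hθ (a * b)]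
end

section
/- Let S be a Clifford semigroup and s a solution on S. Then s is cocommutative (i.e. (CC1) a·θ_b(c) = a·c and (CC2) θ_a∘θ_b = θ_b∘θ_a hold for all a,b,c ∈ S) if, and only if, θ_a(b) = b for all a,b ∈ S. -/
/- Clifford semigroup: semigroup with inversion `inv` such that
`a * inv a * a = a`, `inv a * a * inv a = inv a`, `a * inv a = inv a * a`,
and every idempotent is central.
A solution of the pentagon equation is given by `θ` satisfying (P1) and (P2). -/
theorem pentagon_clifford_cocommutative_iff
    {S : Type*} [Semigroup S] (inv : S → S)
    (hinv1 : ∀ a : S, a * inv a * a = a)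
    (hinv2 : ∀ a : S, inv a * a * inv a = inv a)
    (hinvcomm : ∀ a : S, a * inv a = inv a * a)
    (hcentral : ∀ e : S, e * e = e → ∀ a : S, e * a = a * e)
    (θ : S → S → S)
    (P1 : ∀ a b c : S, θ a b * θ (a * b) c = θ a (b * c))
    (P2 : ∀ a b c : S, θ (θ a b) (θ (a * b) c) = θ b c) :
    ((∀ a b c : S, a * θ b c = a * c) ∧ (∀ a b : S, θ a ∘ θ b = θ b ∘ θ a)) ↔
      (∀ a b : S, θ a b = b) := by
  constructor
  · rintro ⟨CC1, _⟩ a b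
    set u := θ a b with hu
    have hidem : ∀ x : S, (x * inv x) * (x * inv x) = x * inv x := by
      intro x
      calc (x * inv x) * (x * inv x) = (x * inv x * x) * inv x := by
            simp only [mul_assoc]
        _ = x * inv x := by rw [hinv1]
    -- u = f * b where f = u * inv u
    have h1 : u = (u * inv u) * b := by
      have := CC1 (u * inv u) a b
      rw [← hu] at this
      calc u = (u * inv u) * u := by rw [hinv1]
        _ = (u * inv u) * b := this
    -- b = e * u where e = b * inv b
    have h2 : b = (b * inv b) * u := by
      have := CC1 (b * inv b) a b
      rw [← hu] at this
      calc b = (b * inv b) * b := by rw [hinv1]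
        _ = (b * inv b) * u := this.symm
    set e := b * inv b
    set f := u * inv u
    have hcf := hcentral f (hidem u)
    have hff : f * f = f := hidem u
    calc u = f * b := h1
      _ = f * (e * u) := by rw [h2]
      _ = f * (e * (f * b)) := by rw [h1]
      _ = e * (f * (f * b)) := by rw [← mul_assoc, hcf e, mul_assoc]
      _ = e * (f * f * b) := by rw [← mul_assoc f f b]
      _ = e * (f * b) := by rw [hff]
      _ = e * u := by rw [← h1]
      _ = b := h2.symm
  · intro h
    refine ⟨fun a b c => by rw [h], fun a b => ?_⟩
    funext c
    simp [h]
end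

section
/- Let S be a Clifford semigroup and ρ a congruence on S (an equivalence relation compatible with multiplication) such that the quotient semigroup S/ρ is a group, i.e. there exists u ∈ S with (u·a) ρ a and (a·u) ρ a for all a ∈ S, and for every a ∈ S there exists b ∈ S with (a·b) ρ u and (b·a) ρ u. Let μ : S → S be a map such that μ(a) ρ a for every a ∈ S, μ(a) = μ(b) whenever a ρ b, and μ(a·b) = μ(a)·μ(a)⁻¹·μ(a·b) for all a,b ∈ S. Then the maps θ_a(b) := μ(a)⁻¹·μ(a·b) define a solution s(a,b) = (a·b, θ_a(b)) on S, and this solution is idempotent-invariant, i.e. θ_a(e) = θ_a(f) for all a ∈ S and all idempotents e,f of S. -/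
/- Clifford semigroup: semigroup with inversion `inv` such that
`a * inv a * a = a`, `inv a * a * inv a = inv a`, `a * inv a = inv a * a`,
and every idempotent is central.
A solution of the pentagon equation is given by `θ` satisfying (P1) and (P2). -/
theorem pentagon_clifford_solution_from_congruence
    {S : Type*} [Semigroup S] (inv : S → S)
    (hinv1 : ∀ a : S, a * inv a * a = a)
    (hinv2 : ∀ a : S, inv a * a * inv a = inv a)
    (hinvcomm : ∀ a : S, a * inv a = inv a * a)
    (hcentral : ∀ e : S, e * e = e → ∀ a : S, e * a = a * e)
    (ρ : S → S → Prop)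
    (hrefl : ∀ a : S, ρ a a)
    (hsymm : ∀ a b : S, ρ a b → ρ b a)
    (htrans : ∀ a b c : S, ρ a b → ρ b c → ρ a c)
    (hcompat : ∀ a b c d : S, ρ a b → ρ c d → ρ (a * c) (b * d))
    (hgroup : ∃ u : S, (∀ a : S, ρ (u * a) a ∧ ρ (a * u) a) ∧
      ∀ a : S, ∃ b : S, ρ (a * b) u ∧ ρ (b * a) u)
    (μ : S → S)
    (hμρ : ∀ a : S, ρ (μ a) a)
    (hμconst : ∀ a b : S, ρ a b → μ a = μ b)
    (hμ : ∀ a b : S, μ (a * b) = μ a * inv (μ a) * μ (a * b))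
    (θ : S → S → S)
    (hθ : ∀ a b : S, θ a b = inv (μ a) * μ (a * b)) :
    (∀ a b c : S, θ a b * θ (a * b) c = θ a (b * c)) ∧
    (∀ a b c : S, θ (θ a b) (θ (a * b) c) = θ b c) ∧
    (∀ a e f : S, e * e = e → f * f = f → θ a e = θ a f) := by
  obtain ⟨u, hu, hinvex⟩ := hgroup
  -- inv x is ρ-related to any ρ-inverse of x
  have hinvρ : ∀ x v : S, ρ (x * v) u → ρ (v * x) u → ρ (inv x) v := by
    intro x v h1 h2
    have c1 : ρ (v * (x * inv x * x) * v) (inv x) := by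
      have e2 : v * (x * inv x * x) * v = (v * x) * inv x * (x * v) := by
        simp [mul_assoc]
      rw [e2]
      have h3 : ρ ((v * x) * inv x * (x * v)) (u * inv x * u) :=
        hcompat _ _ _ _ (hcompat _ _ _ _ h2 (hrefl _)) h1
      have h4 : ρ (u * inv x * u) (inv x) :=
        htrans _ _ _ (hcompat _ _ _ _ (hu (inv x)).1 (hrefl u)) (hu (inv x)).2
      exact htrans _ _ _ h3 h4
    rw [hinv1 x] at c1
    have c2 : ρ (v * x * v) v :=
      htrans _ _ _ (hcompat _ _ _ _ h2 (hrefl v)) (hu v).1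
    exact htrans _ _ _ (hsymm _ _ c1) c2
  -- θ a b is ρ-related to b
  have hθρ : ∀ a b : S, ρ (θ a b) b := by
    intro a b
    obtain ⟨v, hv1, hv2⟩ := hinvex (μ a)
    have hix := hinvρ (μ a) v hv1 hv2
    have hab : ρ (μ (a * b)) (μ a * b) :=
      htrans _ _ _ (hμρ (a * b)) (hcompat _ _ _ _ (hsymm _ _ (hμρ a)) (hrefl b))
    have c : ρ (inv (μ a) * μ (a * b)) (v * (μ a * b)) := hcompat _ _ _ _ hix hab
    have c2 : ρ (v * (μ a * b)) b := by
      rw [← mul_assoc]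
      exact htrans _ _ _ (hcompat _ _ _ _ hv2 (hrefl b)) (hu b).1
    rw [hθ]
    exact htrans _ _ _ c c2
  have P1 : ∀ a b c : S, θ a b * θ (a * b) c = θ a (b * c) := by
    intro a b c
    rw [hθ, hθ, hθ, ← mul_assoc a b c]
    conv_rhs => rw [hμ (a * b) c]
    simp [mul_assoc]
  refine ⟨P1, ?_, ?_⟩
  · intro a b c
    have h1 : μ (θ a b) = μ b := hμconst _ _ (hθρ a b)
    have h3 : μ (θ a b * θ (a * b) c) = μ (b * c) := by
      rw [P1]; exact hμconst _ _ (hθρ a (b * c))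
    rw [hθ, h1, h3, hθ]
  · have hidem : ∀ e : S, e * e = e → ρ e u := by
      intro e he
      obtain ⟨b, hb1, hb2⟩ := hinvex e
      have e1 : e * b = e * (e * b) := by rw [← mul_assoc, he]
      have c1 : ρ (e * (e * b)) e :=
        htrans _ _ _ (hcompat _ _ _ _ (hrefl e) hb1) (hu e).2
      exact hsymm _ _ (htrans _ _ _ (hsymm _ _ hb1) (e1 ▸ c1))
    intro a e f he hf
    have : μ (a * e) = μ (a * f) :=
      hμconst _ _ (hcompat _ _ _ _ (hrefl a)
        (htrans _ _ _ (hidem e he) (hsymm _ _ (hidem f hf))))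
    rw [hθ, hθ, this]
end

section
/- Let S be a Clifford semigroup and s an idempotent-invariant solution on S. Then θ_e = θ_f for all idempotents e,f ∈ E(S), and θ_{a·e} = θ_a for every a ∈ S and every e ∈ E(S). -/
/- Clifford semigroup: semigroup with inversion `inv` such that
`a * inv a * a = a`, `inv a * a * inv a = inv a`, `a * inv a = inv a * a`,
and every idempotent is central.
A solution of the pentagon equation is given by `θ` satisfying (P1) and (P2). -/
theorem pentagon_clifford_idempotent_invariant_theta_eq
    {S : Type*} [Semigroup S] (inv : S → S)
    (hinv1 : ∀ a : S, a * inv a * a = a)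
    (hinv2 : ∀ a : S, inv a * a * inv a = inv a)
    (hinvcomm : ∀ a : S, a * inv a = inv a * a)
    (hcentral : ∀ e : S, e * e = e → ∀ a : S, e * a = a * e)
    (θ : S → S → S)
    (P1 : ∀ a b c : S, θ a b * θ (a * b) c = θ a (b * c))
    (P2 : ∀ a b c : S, θ (θ a b) (θ (a * b) c) = θ b c)
    (hEinv : ∀ a e f : S, e * e = e → f * f = f → θ a e = θ a f) :
    (∀ e f : S, e * e = e → f * f = f → θ e = θ f) ∧
    (∀ a e : S, e * e = e → θ (a * e) = θ a) := by
  -- e_b := b * inv b is idempotent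
  have idem : ∀ b : S, (b * inv b) * (b * inv b) = b * inv b := by
    intro b
    rw [← mul_assoc, hinv1]
  -- b * e_b = b
  have beb : ∀ b : S, b * (b * inv b) = b := by
    intro b
    rw [← hcentral _ (idem b) b, hinv1]
  -- Lemma A: θ x (b * e) = θ x b for every idempotent e
  have lemA : ∀ x b e : S, e * e = e → θ x (b * e) = θ x b := by
    intro x b e he
    have h1 : θ x (b * e) = θ x b * θ (x * b) e := (P1 x b e).symm
    rw [h1, hEinv (x * b) e (b * inv b) he (idem b), P1, beb]
  have part2 : ∀ a e : S, e * e = e → θ (a * e) = θ a := by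
    intro a e he
    funext c
    have key : e * (a * e) = e * a := by
      rw [← hcentral e he a, ← mul_assoc, he]
    calc θ (a * e) c = θ (θ e (a * e)) (θ (e * (a * e)) c) := (P2 e (a * e) c).symm
      _ = θ (θ e a) (θ (e * a) c) := by rw [lemA e a e he, key]
      _ = θ a c := P2 e a c
  refine ⟨?_, part2⟩
  intro e f he hf
  have h1 : θ (e * f) = θ e := part2 e f hf
  have h2 : θ (f * e) = θ f := part2 f e he
  rw [← h1, ← h2, hcentral e he f]
end

section
/- Let S be a Clifford semigroup and s an idempotent-invariant solution on S. Then for every a ∈ S and every e ∈ E(S): θ_a(e) is an idempotent of S, and θ_e ∘ θ_a = θ_e. -/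
/- Clifford semigroup: semigroup with inversion `inv` such that
`a * inv a * a = a`, `inv a * a * inv a = inv a`, `a * inv a = inv a * a`,
and every idempotent is central.
A solution of the pentagon equation is given by `θ` satisfying (P1) and (P2). -/
theorem pentagon_clifford_idempotent_invariant_theta_idem
    {S : Type*} [Semigroup S] (inv : S → S)
    (hinv1 : ∀ a : S, a * inv a * a = a)
    (hinv2 : ∀ a : S, inv a * a * inv a = inv a)
    (hinvcomm : ∀ a : S, a * inv a = inv a * a)
    (hcentral : ∀ e : S, e * e = e → ∀ a : S, e * a = a * e)
    (θ : S → S → S)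
    (P1 : ∀ a b c : S, θ a b * θ (a * b) c = θ a (b * c))
    (P2 : ∀ a b c : S, θ (θ a b) (θ (a * b) c) = θ b c)
    (hEinv : ∀ a e f : S, e * e = e → f * f = f → θ a e = θ a f) :
    ∀ a e : S, e * e = e →
      (θ a e * θ a e = θ a e) ∧ θ e ∘ θ a = θ e := by
  -- key lemma: θ is the same on all idempotents
  have L : ∀ e f : S, e * e = e → f * f = f → θ e = θ f := by
    intro e f he hf
    set x := e * f with hx
    have hxe : x * e = x := by
      calc x * e = e * (f * e) := by rw [hx, mul_assoc]
        _ = e * (e * f) := by rw [hcentral f hf e]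
        _ = (e * e) * f := by rw [mul_assoc]
        _ = x := by rw [he, hx]
    have hxf : x * f = x := by rw [hx, mul_assoc, hf]
    funext c
    have h1 := P2 x e c
    have h2 := P2 x f c
    rw [hxe] at h1
    rw [hxf] at h2
    rw [hEinv x e f he hf] at h1
    rw [← h1, ← h2]
  intro a e he
  set f := inv a * a with hfdef
  have hf : f * f = f := by
    calc f * f = inv a * a * inv a * a := by
          rw [hfdef]; simp [mul_assoc]
      _ = f := by rw [hinv2]
  have haf : a * f = a := by rw [hfdef, ← mul_assoc, hinv1]
  have hidem : θ a f * θ a f = θ a f := by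
    have := P1 a f f
    rwa [haf, hf] at this
  have hef : θ a e = θ a f := hEinv a e f he hf
  constructor
  · rw [hef]; exact hidem
  · funext b
    have h := P2 a f b
    rw [haf] at h
    have hu : θ a f * θ a f = θ a f := hidem
    calc θ e (θ a b) = θ (θ a f) (θ a b) := by rw [L e (θ a f) he hu]
      _ = θ f b := h
      _ = θ e b := by rw [L f e hf he]
end

section
/- Let S be a Clifford semigroup and s an idempotent-invariant solution on S. Then for all a,b ∈ S and every e ∈ E(S): θ_a(b) = θ_a(e·b), and (θ_e(a))⁻¹ = θ_{e·a}(a⁻¹). -/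
/- Clifford semigroup: semigroup with inversion `inv` such that
`a * inv a * a = a`, `inv a * a * inv a = inv a`, `a * inv a = inv a * a`,
and every idempotent is central.
A solution of the pentagon equation is given by `θ` satisfying (P1) and (P2). -/
theorem pentagon_clifford_idempotent_invariant_theta_absorb
    {S : Type*} [Semigroup S] (inv : S → S)
    (hinv1 : ∀ a : S, a * inv a * a = a)
    (hinv2 : ∀ a : S, inv a * a * inv a = inv a)
    (hinvcomm : ∀ a : S, a * inv a = inv a * a)
    (hcentral : ∀ e : S, e * e = e → ∀ a : S, e * a = a * e)
    (θ : S → S → S)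
    (P1 : ∀ a b c : S, θ a b * θ (a * b) c = θ a (b * c))
    (P2 : ∀ a b c : S, θ (θ a b) (θ (a * b) c) = θ b c)
    (hEinv : ∀ a e f : S, e * e = e → f * f = f → θ a e = θ a f) :
    (∀ a b e : S, e * e = e → θ a b = θ a (e * b)) ∧
    (∀ a e : S, e * e = e → inv (θ e a) = θ (e * a) (inv a)) := by
  -- `inv b * b` is idempotent
  have hg : ∀ b : S, (inv b * b) * (inv b * b) = inv b * b := by
    intro b
    calc (inv b * b) * (inv b * b) = (inv b * b * inv b) * b := by
          simp [mul_assoc]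
      _ = inv b * b := by rw [hinv2]
  -- `b * inv b` is idempotent
  have hg' : ∀ b : S, (b * inv b) * (b * inv b) = b * inv b := by
    intro b; rw [hinvcomm]; exact hg b
  -- right absorption: θ a b * θ (a*b) e = θ a b for any idempotent e
  have star : ∀ a b e : S, e * e = e → θ a b * θ (a * b) e = θ a b := by
    intro a b e he
    have h1 : θ a b * θ (a * b) (inv b * b) = θ a (b * (inv b * b)) := P1 a b _
    have hb : b * (inv b * b) = b := by rw [← mul_assoc]; exact hinv1 b
    rw [hb] at h1
    rw [hEinv (a * b) e (inv b * b) he (hg b)]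
    exact h1
  -- Part 1
  have part1 : ∀ a b e : S, e * e = e → θ a b = θ a (e * b) := by
    intro a b e he
    have h1 : θ a b * θ (a * b) e = θ a (b * e) := P1 a b e
    rw [star a b e he] at h1
    rw [h1, hcentral e he b]
  -- θ e e is idempotent for idempotent e
  have hpe_idem : ∀ e : S, e * e = e → θ e e * θ e e = θ e e := by
    intro e he
    have h := P1 e e e
    rw [he] at h
    exact h
  -- θ (θ e e) (θ e e) = θ e e
  have hpp : ∀ e : S, e * e = e → θ (θ e e) (θ e e) = θ e e := by
    intro e he
    have h := P2 e e e
    rw [he] at h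
    exact h
  -- constancy of θ e e over idempotents e
  have hconst : ∀ e f : S, e * e = e → f * f = f → θ e e = θ f f := by
    intro e f he hf
    have hk : θ (e * f) f * θ (e * f) f = θ (e * f) f := by
      have h1 := P1 (e * f) f f
      have h2 : e * f * f = e * f := by rw [mul_assoc, hf]
      rw [h2, hf] at h1
      exact h1
    have h3 := P2 e f f
    rw [hEinv e f e hf he] at h3
    rw [hEinv (θ e e) (θ (e * f) f) (θ e e) hk (hpe_idem e he)] at h3
    rw [hpp e he] at h3
    exact h3
  -- uniqueness of inverses
  have uniq : ∀ u x : S, u * x * u = u → x * u * x = x → x = inv u := by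
    intro u x h1 h2
    have hu1 : u * inv u * u = u := hinv1 u
    have hu2 : inv u * u * inv u = inv u := hinv2 u
    set y := inv u with hy
    have hxu : (x * u) * (x * u) = x * u := by
      calc (x * u) * (x * u) = x * (u * x * u) := by simp [mul_assoc]
        _ = x * u := by rw [h1]
    have hux : (u * x) * (u * x) = u * x := by
      calc (u * x) * (u * x) = u * (x * u * x) := by simp [mul_assoc]
        _ = u * x := by rw [h2]
    have hyu : (y * u) * (y * u) = y * u := by
      calc (y * u) * (y * u) = y * (u * y * u) := by simp [mul_assoc]
        _ = y * u := by rw [hu1]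
    have huy : (u * y) * (u * y) = u * y := by
      calc (u * y) * (u * y) = u * (y * u * y) := by simp [mul_assoc]
        _ = u * y := by rw [hu2]
    have e1 : x = y * u * x := by
      calc x = x * u * x := h2.symm
        _ = x * (u * y * u) * x := by rw [hu1]
        _ = (x * u) * (y * u) * x := by simp [mul_assoc]
        _ = (y * u) * (x * u) * x := by rw [hcentral (x * u) hxu (y * u)]
        _ = y * (u * (x * u * x)) := by simp [mul_assoc]
        _ = y * (u * x) := by rw [h2]
        _ = y * u * x := by rw [mul_assoc]
    have e2 : y = x * u * y := by
      calc y = y * u * y := hu2.symm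
        _ = y * (u * x * u) * y := by rw [h1]
        _ = (y * u) * (x * u) * y := by simp [mul_assoc]
        _ = (x * u) * (y * u) * y := by rw [hcentral (y * u) hyu (x * u)]
        _ = x * (u * (y * u * y)) := by simp [mul_assoc]
        _ = x * (u * y) := by rw [hu2]
        _ = x * u * y := by rw [mul_assoc]
    calc x = y * u * x := e1
      _ = (x * u * y) * u * x := by rw [← e2]
      _ = x * ((u * y) * (u * x)) := by simp [mul_assoc]
      _ = x * ((u * x) * (u * y)) := by rw [hcentral (u * y) huy (u * x)]
      _ = (x * u * x) * (u * y) := by simp [mul_assoc]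
      _ = x * (u * y) := by rw [h2]
      _ = x * u * y := by rw [mul_assoc]
      _ = y := e2.symm
  refine ⟨part1, ?_⟩
  intro a e he
  -- notation
  set g := a * inv a with hgdef
  have hgid : g * g = g := hg' a
  have hga : g * a = a := by rw [hgdef, hinv1]
  have hgia : g * inv a = inv a := by
    rw [hgdef, hinvcomm]; exact hinv2 a
  have hegid : (e * g) * (e * g) = e * g := by
    calc (e * g) * (e * g) = e * (g * e) * g := by simp [mul_assoc]
      _ = e * (e * g) * g := by rw [← hcentral e he g]
      _ = (e * e) * (g * g) := by simp [mul_assoc]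
      _ = e * g := by rw [he, hgid]
  set u := θ e a with hudef
  set v := θ (e * a) (inv a) with hvdef
  set p := θ e g with hpdef
  -- u * v = p
  have huv : u * v = p := P1 e a (inv a)
  -- p = θ e e, idempotent
  have hpe : p = θ e e := hEinv e g e hgid he
  have hpidem : p * p = p := by rw [hpe]; exact hpe_idem e he
  -- q = θ (e*g) g equals p
  have hq : θ (e * g) g = p := by
    calc θ (e * g) g = θ (e * g) (e * g) := hEinv (e * g) g (e * g) hgid hegid
      _ = θ e e := (hconst e (e * g) he hegid).symm
      _ = p := hpe.symm
  -- v * p = v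
  have hvp : v * p = v := by
    have h1 := star (e * a) (inv a) g hgid
    have h2 : (e * a) * inv a = e * g := by rw [mul_assoc, hgdef]
    rw [h2, hq] at h1
    exact h1
  have hpv : p * v = v := by
    rw [hcentral p hpidem v]; exact hvp
  -- u = p * θ (e*g) a
  have hpu : p * u = u := by
    have h1 : θ e g * θ (e * g) a = θ e (g * a) := P1 e g a
    rw [hga] at h1
    calc p * u = p * (p * θ (e * g) a) := by rw [h1]
      _ = (p * p) * θ (e * g) a := by rw [mul_assoc]
      _ = p * θ (e * g) a := by rw [hpidem]
      _ = u := h1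
  -- v is an inverse of u
  have huvu : u * v * u = u := by rw [huv, hpu]
  have hvuv : v * u * v = v := by
    calc v * u * v = v * (u * v) := by rw [mul_assoc]
      _ = v * p := by rw [huv]
      _ = v := hvp
  exact (uniq u v huvu hvuv).symm
end

section
/- Let S be a Clifford semigroup and s an idempotent-invariant solution on S with kernel K. Then K = {a ∈ S : θ_e(a) ∈ E(S) for every e ∈ E(S)}, and moreover, for every a ∈ S and e ∈ E(S), if a·e ∈ K then a ∈ K. -/
theorem pentagon_clifford_idempotent_invariant_kernel
    {S : Type*} [Semigroup S] (inv : S → S)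
    (hinv1 : ∀ a : S, a * inv a * a = a)
    (hinv2 : ∀ a : S, inv a * a * inv a = inv a)
    (hinvcomm : ∀ a : S, a * inv a = inv a * a)
    (hcentral : ∀ e : S, e * e = e → ∀ a : S, e * a = a * e)
    (θ : S → S → S)
    (P1 : ∀ a b c : S, θ a b * θ (a * b) c = θ a (b * c))
    (P2 : ∀ a b c : S, θ (θ a b) (θ (a * b) c) = θ b c)
    (hEinv : ∀ a e f : S, e * e = e → f * f = f → θ a e = θ a f) :
    ({a : S | InKernel inv θ a} =
      {a : S | ∀ e : S, e * e = e → θ e a * θ e a = θ e a}) ∧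
    (∀ a e : S, e * e = e → InKernel inv θ (a * e) → InKernel inv θ a) := by
  have hprod : ∀ x y : S, x * x = x → y * y = y → (x * y) * (x * y) = x * y := by
    intro x y hx hy
    have h : x * y * (x * y) = x * x * (y * y) := by
      rw [mul_assoc x y (x * y), ← mul_assoc y x y, hcentral y hy x,
        mul_assoc x y y, ← mul_assoc]
    rw [h, hx, hy]
  have hθee : ∀ g : S, g * g = g → θ g g * θ g g = θ g g := by
    intro g hg
    have h := P1 g g g
    rw [hg] at h
    exact h
  have hK : ∀ a : S, InKernel inv θ a → ∀ g : S, g * g = g →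
      θ g a * θ g a = θ g a := by
    intro a hker g hg
    have hf : (a * inv a) * (a * inv a) = a * inv a := by
      rw [← mul_assoc, hinv1]
    have hfa : a * inv a * a = a := hinv1 a
    have hgf : (g * (a * inv a)) * (g * (a * inv a)) = g * (a * inv a) :=
      hprod g (a * inv a) hg hf
    have hle : g * (a * inv a) = g * (a * inv a) * a * inv a := by
      rw [mul_assoc g (a * inv a) a, hfa, mul_assoc]
    have hka := hker (g * (a * inv a)) hgf hle
    have hgoal : θ g g * θ (g * (a * inv a)) a = θ g a := by
      rw [hEinv g g (a * inv a) hg hf, P1, hfa]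
    rw [← hgoal]
    exact hprod _ _ (hθee g hg) hka
  constructor
  · ext a
    simp only [Set.mem_setOf_eq]
    exact ⟨fun h => hK a h, fun h g hg _ => h g hg⟩
  · intro a e he hker
    intro g hg _
    have hia : (inv a * a) * (inv a * a) = inv a * a := by
      rw [← mul_assoc, hinv2]
    have h1 : θ g a * θ (g * a) (inv a * a) = θ g a := by
      have h := P1 g a (inv a * a)
      rw [show a * (inv a * a) = a from by rw [← mul_assoc, hinv1]] at h
      exact h
    have h2 : θ g (a * e) = θ g a := by
      rw [← P1 g a e, hEinv (g * a) e (inv a * a) he hia, h1]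
    rw [← h2]
    exact hK (a * e) hker g hg
end

section
/- Let S be a Clifford semigroup and s an idempotent-invariant solution on S. Then for all a,b ∈ S and every e ∈ E(S): θ_e(a·b) = θ_e(a)·(θ_e(a))⁻¹·θ_e(a·b), and θ_a(b) = (θ_e(a))⁻¹·θ_e(a·b). -/
/- Clifford semigroup: semigroup with inversion `inv` such that
`a * inv a * a = a`, `inv a * a * inv a = inv a`, `a * inv a = inv a * a`,
and every idempotent is central.
A solution of the pentagon equation is given by `θ` satisfying (P1) and (P2). -/
theorem pentagon_clifford_idempotent_invariant_theta_formula
    {S : Type*} [Semigroup S] (inv : S → S)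
    (hinv1 : ∀ a : S, a * inv a * a = a)
    (hinv2 : ∀ a : S, inv a * a * inv a = inv a)
    (hinvcomm : ∀ a : S, a * inv a = inv a * a)
    (hcentral : ∀ e : S, e * e = e → ∀ a : S, e * a = a * e)
    (θ : S → S → S)
    (P1 : ∀ a b c : S, θ a b * θ (a * b) c = θ a (b * c))
    (P2 : ∀ a b c : S, θ (θ a b) (θ (a * b) c) = θ b c)
    (hEinv : ∀ a e f : S, e * e = e → f * f = f → θ a e = θ a f) :
    (∀ a b e : S, e * e = e →
      θ e (a * b) = θ e a * inv (θ e a) * θ e (a * b)) ∧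
    (∀ a b e : S, e * e = e →
      θ a b = inv (θ e a) * θ e (a * b)) := by
  -- basic inverse/idempotent facts
  have hidem_f : ∀ q : S, (inv q * q) * (inv q * q) = inv q * q := by
    intro q
    rw [mul_assoc, ← mul_assoc q (inv q) q, hinv1]
  have hqf : ∀ q : S, q * (inv q * q) = q := by
    intro q; rw [← mul_assoc, hinv1]
  have hfq : ∀ q : S, (inv q * q) * q = q := by
    intro q; rw [← hinvcomm, hinv1]
  have hE2 : ∀ s : S, (s * inv s) * (s * inv s) = s * inv s := by
    intro s
    rw [mul_assoc, ← mul_assoc (inv s) s (inv s), hinv2]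
  -- L1 : θ p (q * e) = θ p q for idempotent e
  have L1 : ∀ p q e : S, e * e = e → θ p (q * e) = θ p q := by
    intro p q e he
    calc θ p (q * e) = θ p q * θ (p * q) e := (P1 p q e).symm
      _ = θ p q * θ (p * q) (inv q * q) := by
          rw [hEinv (p * q) e (inv q * q) he (hidem_f q)]
      _ = θ p (q * (inv q * q)) := P1 p q (inv q * q)
      _ = θ p q := by rw [hqf q]
  -- L2 : θ p (e * q) = θ p q for idempotent e
  have L2 : ∀ p q e : S, e * e = e → θ p (e * q) = θ p q := by
    intro p q e he
    rw [hcentral e he q]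
    exact L1 p q e he
  -- L3 : θ (e * q) c = θ q c for idempotent e
  have L3 : ∀ q c e : S, e * e = e → θ (e * q) c = θ q c := by
    intro q c e he
    have A := P2 e q c
    have B := P2 e (e * q) c
    rw [L2 e q e he] at B
    have hassoc : e * (e * q) = e * q := by rw [← mul_assoc, he]
    rw [hassoc] at B
    exact B.symm.trans A
  -- L4 : θ E c = θ F c for idempotents E, F
  have L4 : ∀ c E F : S, E * E = E → F * F = F → θ E c = θ F c := by
    intro c E F hE hF
    calc θ E c = θ (F * E) c := (L3 E c F hF).symm
      _ = θ (E * F) c := by rw [hcentral F hF E]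
      _ = θ F c := L3 F c E hE
  -- L5 : θ e e * θ e c = θ e c
  have L5 : ∀ e c : S, e * e = e → θ e e * θ e c = θ e c := by
    intro e c he
    have h := P1 e e c
    rw [he] at h
    rw [h, L2 e c e he]
  have hw : ∀ e : S, e * e = e → θ e e * θ e e = θ e e := fun e he => L5 e e he
  -- L8 : θ e e * θ r e = θ r e
  have L8 : ∀ r e : S, e * e = e → θ e e * θ r e = θ r e := by
    intro r e he
    have fact := P1 r (inv r) (inv (inv r))
    have h1 : θ r (inv r * inv (inv r)) = θ r e :=
      hEinv r (inv r * inv (inv r)) e (hE2 (inv r)) he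
    have h2 : θ (r * inv r) (inv (inv r)) = θ e (inv (inv r)) :=
      L4 (inv (inv r)) (r * inv r) e (hE2 r) he
    rw [h1, h2] at fact
    calc θ e e * θ r e
        = θ e e * (θ r (inv r) * θ e (inv (inv r))) := by rw [fact]
      _ = (θ e e * θ r (inv r)) * θ e (inv (inv r)) := (mul_assoc _ _ _).symm
      _ = (θ r (inv r) * θ e e) * θ e (inv (inv r)) := by
          rw [hcentral (θ e e) (hw e he) (θ r (inv r))]
      _ = θ r (inv r) * (θ e e * θ e (inv (inv r))) := mul_assoc _ _ _
      _ = θ r (inv r) * θ e (inv (inv r)) := by rw [L5 e (inv (inv r)) he]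
      _ = θ r e := fact
  -- L9 : θ e e * θ a b = θ a b
  have L9 : ∀ a b e : S, e * e = e → θ e e * θ a b = θ a b := by
    intro a b e he
    have habs : θ a b * θ (a * b) e = θ a b := by
      have h := P1 a b (inv b * b)
      rw [hqf b] at h
      rw [hEinv (a * b) (inv b * b) e (hidem_f b) he] at h
      exact h
    calc θ e e * θ a b
        = θ e e * (θ a b * θ (a * b) e) := by rw [habs]
      _ = (θ a b * θ (a * b) e) * θ e e :=
          hcentral (θ e e) (hw e he) (θ a b * θ (a * b) e)
      _ = θ a b * (θ (a * b) e * θ e e) := mul_assoc _ _ _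
      _ = θ a b * (θ e e * θ (a * b) e) := by
          rw [hcentral (θ e e) (hw e he) (θ (a * b) e)]
      _ = θ a b * θ (a * b) e := by rw [L8 (a * b) e he]
      _ = θ a b := habs
  -- L10 : inv (θ e a) * θ e a = θ e e
  have L10 : ∀ a e : S, e * e = e → inv (θ e a) * θ e a = θ e e := by
    intro a e he
    have hyw : θ e a * θ e e = θ e a := by
      rw [← hcentral (θ e e) (hw e he) (θ e a)]
      exact L5 e a he
    have ha : inv (θ e a) * θ e a * θ e e = inv (θ e a) * θ e a := by
      calc inv (θ e a) * θ e a * θ e e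
          = inv (θ e a) * (θ e a * θ e e) := mul_assoc _ _ _
        _ = inv (θ e a) * θ e a := by rw [hyw]
    have hfac : θ e a * θ (e * a) (inv a) = θ e e := by
      have h := P1 e a (inv a)
      rw [hEinv e (a * inv a) e (hE2 a) he] at h
      exact h
    have hb : inv (θ e a) * θ e a * θ e e = θ e e := by
      calc inv (θ e a) * θ e a * θ e e
          = inv (θ e a) * θ e a * (θ e a * θ (e * a) (inv a)) := by rw [hfac]
        _ = inv (θ e a) * θ e a * θ e a * θ (e * a) (inv a) :=
            (mul_assoc (inv (θ e a) * θ e a) (θ e a) (θ (e * a) (inv a))).symm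
        _ = θ e a * θ (e * a) (inv a) := by rw [hfq (θ e a)]
        _ = θ e e := hfac
    exact ha.symm.trans hb
  constructor
  · intro a b e he
    have h : θ e a * inv (θ e a) = θ e e := (hinvcomm (θ e a)).trans (L10 a e he)
    rw [h, L5 e (a * b) he]
  · intro a b e he
    calc θ a b = θ e e * θ a b := (L9 a b e he).symm
      _ = inv (θ e a) * θ e a * θ a b := by rw [L10 a e he]
      _ = inv (θ e a) * θ e a * θ (e * a) b := by rw [L3 a b e he]
      _ = inv (θ e a) * (θ e a * θ (e * a) b) := mul_assoc _ _ _
      _ = inv (θ e a) * θ e (a * b) := by rw [P1 e a b]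
end

section
/- Let S be a Clifford semigroup and s an idempotent-invariant solution on S with kernel K. Then for every a ∈ S and every e ∈ E(S), a⁻¹·θ_e(a) ∈ K; and for all a,b ∈ S and every e ∈ E(S), if a·b⁻¹ ∈ K then θ_e(a) = θ_e(b). -/
theorem pentagon_clifford_idempotent_invariant_kernel_representatives
    {S : Type*} [Semigroup S] (inv : S → S)
    (hinv1 : ∀ a : S, a * inv a * a = a)
    (hinv2 : ∀ a : S, inv a * a * inv a = inv a)
    (hinvcomm : ∀ a : S, a * inv a = inv a * a)
    (hcentral : ∀ e : S, e * e = e → ∀ a : S, e * a = a * e)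
    (θ : S → S → S)
    (P1 : ∀ a b c : S, θ a b * θ (a * b) c = θ a (b * c))
    (P2 : ∀ a b c : S, θ (θ a b) (θ (a * b) c) = θ b c)
    (hEinv : ∀ a e f : S, e * e = e → f * f = f → θ a e = θ a f) :
    (∀ a e : S, e * e = e → InKernel inv θ (inv a * θ e a)) ∧
    (∀ a b e : S, e * e = e → InKernel inv θ (a * inv b) → θ e a = θ e b) := by
  -- inv a * a and a * inv a are idempotent
  have hidem1 : ∀ a : S, (inv a * a) * (inv a * a) = inv a * a := by
    intro a
    calc (inv a * a) * (inv a * a) = inv a * (a * inv a * a) := by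
          simp [mul_assoc]
      _ = inv a * a := by rw [hinv1]
  have hidem2 : ∀ a : S, (a * inv a) * (a * inv a) = a * inv a := by
    intro a
    calc (a * inv a) * (a * inv a) = a * (inv a * a * inv a) := by
          simp [mul_assoc]
      _ = a * inv a := by rw [hinv2]
  -- F1 : absorption of idempotents in the second argument (right)
  have F1 : ∀ u b f : S, f * f = f → θ u (b * f) = θ u b := by
    intro u b f hf
    have h1 : θ u b * θ (u * b) f = θ u (b * f) := P1 u b f
    have h2 : θ u b * θ (u * b) (inv b * b) = θ u (b * (inv b * b)) := P1 u b (inv b * b)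
    have hb : b * (inv b * b) = b := by rw [← mul_assoc, hinv1]
    have h3 : θ (u * b) f = θ (u * b) (inv b * b) := hEinv _ _ _ hf (hidem1 b)
    rw [← h1, h3, h2, hb]
  -- F1' : absorption of idempotents in the second argument (left)
  have F1' : ∀ u b f : S, f * f = f → θ u (f * b) = θ u b := by
    intro u b f hf
    rw [hcentral f hf b]; exact F1 u b f hf
  -- L11 : idempotent left factors of the first argument can be dropped
  have L11 : ∀ e a c : S, e * e = e → θ (e * a) c = θ a c := by
    intro e a c he
    have h1 : θ (θ e (e * a)) (θ (e * (e * a)) c) = θ (e * a) c := P2 e (e * a) c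
    have h2 : e * (e * a) = e * a := by rw [← mul_assoc, he]
    have h3 : θ e (e * a) = θ e a := F1' e a e he
    rw [h2, h3] at h1
    exact h1.symm.trans (P2 e a c)
  have L11r : ∀ e a c : S, e * e = e → θ (a * e) c = θ a c := by
    intro e a c he
    rw [← hcentral e he a]; exact L11 e a c he
  -- L9 : θ u e is a left identity on the image of θ u
  have L9 : ∀ u c e : S, e * e = e → θ u e * θ u c = θ u c := by
    intro u c e he
    have h1 : θ u e * θ (u * e) c = θ u (e * c) := P1 u e c
    rw [L11r e u c he, F1' u c e he] at h1
    exact h1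
  have L9i : ∀ u e : S, e * e = e → θ u e * θ u e = θ u e := fun u e he => L9 u e e he
  -- key : θ e c = θ (θ u e) (θ u c) for idempotent e
  have key : ∀ u e c : S, e * e = e → θ e c = θ (θ u e) (θ u c) := by
    intro u e c he
    have h1 : θ (θ u e) (θ (u * e) c) = θ e c := P2 u e c
    rw [L11r e u c he] at h1
    exact h1.symm
  -- L12 : θ e = θ f for all idempotents e, f
  have L12 : ∀ e f c : S, e * e = e → f * f = f → θ e c = θ f c := by
    intro e f c he hf
    rw [key e e c he, key e f c hf, hEinv e e f he hf]
  -- L13 : θ e ∘ θ u = θ e for idempotent e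
  have L13 : ∀ e u c : S, e * e = e → θ e (θ u c) = θ e c := by
    intro e u c he
    have h1 := key u e c he
    have h2 : θ (θ u e) (θ u c) = θ e (θ u c) := L12 (θ u e) e (θ u c) (L9i u e he) he
    rw [h1, h2]
  constructor
  · -- Goal 1 : inv a * θ e a ∈ K
    intro a e he g hg _
    have hinvstep : ∀ c : S, θ (inv a) c = θ (θ a (inv a)) (θ (a * inv a) c) :=
      fun c => (P2 a (inv a) c).symm
    have hmid : θ (a * inv a) (θ e a) = θ (a * inv a) a := L13 (a * inv a) e a (hidem2 a)
    have h4 : θ (inv a) (θ e a) = θ (inv a) a := by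
      rw [hinvstep (θ e a), hinvstep a, hmid]
    have h5 : θ g (inv a * θ e a) = θ g (inv a) * θ (g * inv a) (θ e a) :=
      (P1 g (inv a) (θ e a)).symm
    have h6 : θ (g * inv a) (θ e a) = θ (inv a) (θ e a) := L11 g (inv a) _ hg
    have h7 : θ (g * inv a) a = θ (inv a) a := L11 g (inv a) a hg
    have h8 : θ g (inv a) * θ (g * inv a) a = θ g (inv a * a) := P1 g (inv a) a
    have hx : θ g (inv a * θ e a) = θ g (inv a * a) := by
      rw [h5, h6, h4, ← h7, h8]
    rw [hx]
    exact L9i g (inv a * a) (hidem1 a)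
  · -- Goal 2 : a * inv b ∈ K implies θ e a = θ e b
    intro a b e he hK
    have hh : ((a * inv b) * inv (a * inv b)) * ((a * inv b) * inv (a * inv b))
        = (a * inv b) * inv (a * inv b) := hidem2 (a * inv b)
    have hc : ((a * inv b) * inv (a * inv b)) * e = e * ((a * inv b) * inv (a * inv b)) :=
      (hcentral e he ((a * inv b) * inv (a * inv b))).symm
    -- g := e * (k * inv k) is an idempotent below k := a * inv b
    have hg : (e * ((a * inv b) * inv (a * inv b))) * (e * ((a * inv b) * inv (a * inv b)))
        = e * ((a * inv b) * inv (a * inv b)) := by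
      calc (e * ((a * inv b) * inv (a * inv b))) * (e * ((a * inv b) * inv (a * inv b)))
          = e * ((a * inv b) * inv (a * inv b) * e * ((a * inv b) * inv (a * inv b))) := by
            simp [mul_assoc]
        _ = e * (e * ((a * inv b) * inv (a * inv b)) * ((a * inv b) * inv (a * inv b))) := by
            rw [hc]
        _ = e * (e * ((a * inv b) * inv (a * inv b) * ((a * inv b) * inv (a * inv b)))) := by
            rw [mul_assoc e ((a * inv b) * inv (a * inv b)) ((a * inv b) * inv (a * inv b))]
        _ = e * (e * ((a * inv b) * inv (a * inv b))) := by rw [hh]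
        _ = e * e * ((a * inv b) * inv (a * inv b)) := by
            rw [mul_assoc e e ((a * inv b) * inv (a * inv b))]
        _ = e * ((a * inv b) * inv (a * inv b)) := by rw [he]
    have hle' : e * ((a * inv b) * inv (a * inv b)) * (a * inv b) * inv (a * inv b)
        = e * ((a * inv b) * inv (a * inv b)) := by
      calc e * ((a * inv b) * inv (a * inv b)) * (a * inv b) * inv (a * inv b)
          = e * ((a * inv b) * inv (a * inv b) * ((a * inv b) * inv (a * inv b))) := by
            simp [mul_assoc]
        _ = e * ((a * inv b) * inv (a * inv b)) := by rw [hh]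
    have hle : e * ((a * inv b) * inv (a * inv b))
        = e * ((a * inv b) * inv (a * inv b)) * (a * inv b) * inv (a * inv b) := hle'.symm
    have hgk : θ (e * ((a * inv b) * inv (a * inv b))) (a * inv b) = θ e (a * inv b) := by
      rw [L11 e ((a * inv b) * inv (a * inv b)) (a * inv b) he]
      exact L12 _ e (a * inv b) hh he
    have hj : θ e (a * inv b) * θ e (a * inv b) = θ e (a * inv b) := by
      have := hK (e * ((a * inv b) * inv (a * inv b))) hg hle
      rwa [hgk] at this
    -- θ e a = θ e (a * inv b) * θ (a * inv b) b
    have hEq : θ e a = θ e (a * inv b) * θ (a * inv b) b := by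
      rw [← F1 e a (inv b * b) (hidem1 b), ← mul_assoc, ← P1 e (a * inv b) b,
        L11 e (a * inv b) b he]
    calc θ e a = θ e (θ e a) := (L13 e e a he).symm
      _ = θ e (θ e (a * inv b) * θ (a * inv b) b) := by rw [hEq]
      _ = θ e (θ (a * inv b) b) := F1' e (θ (a * inv b) b) (θ e (a * inv b)) hj
      _ = θ e b := L13 e (a * inv b) b he
end

section
/- Let S and T be Clifford semigroups, s an idempotent-invariant solution on S with maps θ_a, and t an idempotent-invariant solution on T with maps η_u. Then s and t are isomorphic, i.e. there exists a semigroup isomorphism ψ : S → T with ψ(θ_a(b)) = η_{ψ(a)}(ψ(b)) for all a,b ∈ S, if and only if there exists a semigroup isomorphism ψ : S → T such that ψ(θ_e(a)) = η_{ψ(e)}(ψ(a)) for every idempotent e of S and every a ∈ S. -/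
/- Clifford semigroup: semigroup with inversion `inv` such that
`a * inv a * a = a`, `inv a * a * inv a = inv a`, `a * inv a = inv a * a`,
and every idempotent is central.
A solution of the pentagon equation is given by `θ` satisfying (P1) and (P2). -/
section PentagonAux

variable {G : Type*} [Semigroup G]

/-- Uniqueness of commuting inverses in a semigroup whose idempotents are central. -/
theorem pe_inv_unique (hcentral : ∀ e : G, e * e = e → ∀ a : G, e * a = a * e)
    (x x' x'' : G)
    (h1 : x * x' * x = x) (h2' : x' * x * x' = x') (h3 : x * x' = x' * x)
    (h1' : x * x'' * x = x) (h2'' : x'' * x * x'' = x'') (h3' : x * x'' = x'' * x) :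
    x' = x'' := by
  have hp : (x' * x) * (x' * x) = x' * x := by
    calc (x' * x) * (x' * x) = x' * (x * x' * x) := by simp only [mul_assoc]
    _ = x' * x := by rw [h1]
  have hA : x' = x'' * (x * x') := by
    have e1 : (x' * x) * ((x'' * x) * x') = x'' * (x * x') := by
      calc (x' * x) * ((x'' * x) * x') = ((x' * x) * (x'' * x)) * x' := by
            simp only [mul_assoc]
      _ = ((x'' * x) * (x' * x)) * x' := by rw [hcentral _ hp (x'' * x)]
      _ = x'' * ((x * x' * x) * x') := by simp only [mul_assoc]
      _ = x'' * (x * x') := by rw [h1]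
    calc x' = x' * x * x' := h2'.symm
    _ = x' * (x * x'' * x) * x' := by rw [h1']
    _ = (x' * x) * ((x'' * x) * x') := by simp only [mul_assoc]
    _ = x'' * (x * x') := e1
  have hpq : x' * x = x'' * x := by
    calc x' * x = (x'' * (x * x')) * x := by rw [← hA]
    _ = x'' * (x * x' * x) := by simp only [mul_assoc]
    _ = x'' * x := by rw [h1]
  calc x' = x'' * (x * x') := hA
  _ = x'' * (x' * x) := by rw [h3]
  _ = x'' * (x'' * x) := by rw [hpq]
  _ = x'' * (x * x'') := by rw [← h3']
  _ = x'' := by rw [← mul_assoc]; exact h2''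

/-- A central idempotent `f` fixing `x` fixes any product `y * x * r`. -/
theorem pe_sandwich (hcentral : ∀ e : G, e * e = e → ∀ a : G, e * a = a * e)
    (f y x r : G) (hff : f * f = f) (hfx : f * x = x) :
    f * (y * x * r) = y * x * r := by
  calc f * (y * x * r) = (f * y) * (x * r) := by simp only [mul_assoc]
  _ = (y * f) * (x * r) := by rw [hcentral f hff y]
  _ = y * ((f * x) * r) := by simp only [mul_assoc]
  _ = y * (x * r) := by rw [hfx]
  _ = y * x * r := by simp only [mul_assoc]

/-- Key lemma: the support idempotent of `θ (a * a⁻¹) a` acts as the identity on `θ a b`. -/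
theorem pe_keyM (invG : G → G)
    (hinv1 : ∀ a : G, a * invG a * a = a)
    (hinvcomm : ∀ a : G, a * invG a = invG a * a)
    (hcentral : ∀ e : G, e * e = e → ∀ a : G, e * a = a * e)
    (θ : G → G → G)
    (P1 : ∀ a b c : G, θ a b * θ (a * b) c = θ a (b * c))
    (hEinv : ∀ a e f : G, e * e = e → f * f = f → θ a e = θ a f)
    (a b : G) :
    (invG (θ (a * invG a) a) * θ (a * invG a) a) * θ a b = θ a b := by
  obtain ⟨e, he_def⟩ : ∃ e, e = a * invG a := ⟨_, rfl⟩
  rw [← he_def]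
  obtain ⟨x, hx_def⟩ : ∃ x, x = θ e a := ⟨_, rfl⟩
  rw [← hx_def]
  obtain ⟨f, hf_def⟩ : ∃ f, f = invG x * x := ⟨_, rfl⟩
  rw [← hf_def]
  obtain ⟨eb, heb_def⟩ : ∃ eb, eb = b * invG b := ⟨_, rfl⟩
  have he : e * e = e := by
    rw [he_def]
    calc (a * invG a) * (a * invG a) = (a * invG a * a) * invG a := by
          simp only [mul_assoc]
    _ = a * invG a := by rw [hinv1]
  have heb : eb * eb = eb := by
    rw [heb_def]
    calc (b * invG b) * (b * invG b) = (b * invG b * b) * invG b := by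
          simp only [mul_assoc]
    _ = b * invG b := by rw [hinv1]
  have hebb : eb * b = b := by rw [heb_def]; exact hinv1 b
  have hF1 : θ a eb * θ (a * eb) b = θ a b := by rw [P1 a eb b, hebb]
  have hF2 : θ a eb = θ a (invG a) * x := by
    have h := P1 a (invG a) a
    rw [← he_def] at h
    rw [← hx_def] at h
    rw [← hinvcomm a] at h
    rw [← he_def] at h
    exact (hEinv a eb e heb he).trans h.symm
  have hff : f * f = f := by
    rw [hf_def]
    calc (invG x * x) * (invG x * x) = invG x * (x * invG x * x) := by
          simp only [mul_assoc]
    _ = invG x * x := by rw [hinv1]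
  have hfx : f * x = x := by
    rw [hf_def, ← hinvcomm]
    exact hinv1 x
  rw [← hF1, hF2]
  exact pe_sandwich hcentral f (θ a (invG a)) x (θ (a * eb) b) hff hfx

end PentagonAux

theorem pentagon_clifford_idempotent_invariant_isomorphic_iff
    {S T : Type*} [Semigroup S] [Semigroup T]
    (invS : S → S) (invT : T → T)
    (hinv1S : ∀ a : S, a * invS a * a = a)
    (hinv2S : ∀ a : S, invS a * a * invS a = invS a)
    (hinvcommS : ∀ a : S, a * invS a = invS a * a)
    (hcentralS : ∀ e : S, e * e = e → ∀ a : S, e * a = a * e)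
    (hinv1T : ∀ u : T, u * invT u * u = u)
    (hinv2T : ∀ u : T, invT u * u * invT u = invT u)
    (hinvcommT : ∀ u : T, u * invT u = invT u * u)
    (hcentralT : ∀ e : T, e * e = e → ∀ u : T, e * u = u * e)
    (θ : S → S → S)
    (P1S : ∀ a b c : S, θ a b * θ (a * b) c = θ a (b * c))
    (P2S : ∀ a b c : S, θ (θ a b) (θ (a * b) c) = θ b c)
    (hEinvS : ∀ a e f : S, e * e = e → f * f = f → θ a e = θ a f)
    (η : T → T → T)
    (P1T : ∀ u v w : T, η u v * η (u * v) w = η u (v * w))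
    (P2T : ∀ u v w : T, η (η u v) (η (u * v) w) = η v w)
    (hEinvT : ∀ u e f : T, e * e = e → f * f = f → η u e = η u f) :
    (∃ ψ : S ≃* T, ∀ a b : S, ψ (θ a b) = η (ψ a) (ψ b)) ↔
    (∃ ψ : S ≃* T, ∀ e : S, e * e = e → ∀ a : S, ψ (θ e a) = η (ψ e) (ψ a)) := by
  constructor
  · rintro ⟨ψ, hψ⟩
    exact ⟨ψ, fun e _ a => hψ e a⟩
  · rintro ⟨ψ, hψ⟩
    refine ⟨ψ, fun a b => ?_⟩
    have hinvψ : ∀ c : S, ψ (invS c) = invT (ψ c) := by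
      intro c
      refine pe_inv_unique hcentralT (ψ c) (ψ (invS c)) (invT (ψ c)) ?_ ?_ ?_
        (hinv1T (ψ c)) (hinv2T (ψ c)) (hinvcommT (ψ c))
      · rw [← map_mul, ← map_mul, hinv1S]
      · rw [← map_mul, ← map_mul, hinv2S]
      · rw [← map_mul, ← map_mul, hinvcommS]
    obtain ⟨e, he_def⟩ : ∃ e, e = a * invS a := ⟨_, rfl⟩
    have he : e * e = e := by
      rw [he_def]
      calc (a * invS a) * (a * invS a) = (a * invS a * a) * invS a := by
            simp only [mul_assoc]
      _ = a * invS a := by rw [hinv1S]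
    have hea : e * a = a := by rw [he_def]; exact hinv1S a
    have hψx : ψ (θ e a) = η (ψ e) (ψ a) := hψ e he a
    have hψe : ψ e = ψ a * invT (ψ a) := by
      rw [he_def, map_mul, hinvψ]
    -- Step 1 : X * ψ (θ a b) = X * η (ψ a) (ψ b), with X = η (ψ e) (ψ a)
    have hXPQ : η (ψ e) (ψ a) * ψ (θ a b) = η (ψ e) (ψ a) * η (ψ a) (ψ b) := by
      have l1 : θ e a * θ a b = θ e (a * b) := by
        have h := P1S e a b
        rwa [hea] at h
      have l2 : ψ e * ψ a = ψ a := by rw [← map_mul, hea]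
      calc η (ψ e) (ψ a) * ψ (θ a b) = ψ (θ e a) * ψ (θ a b) := by rw [hψx]
      _ = ψ (θ e a * θ a b) := (map_mul ψ _ _).symm
      _ = ψ (θ e (a * b)) := by rw [l1]
      _ = η (ψ e) (ψ (a * b)) := hψ e he (a * b)
      _ = η (ψ e) (ψ a * ψ b) := by rw [map_mul ψ a b]
      _ = η (ψ e) (ψ a) * η (ψ e * ψ a) (ψ b) := (P1T _ _ _).symm
      _ = η (ψ e) (ψ a) * η (ψ a) (ψ b) := by rw [l2]
    -- Step 2 : the support idempotent F = invT X * X fixes both sides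
    have hFP : (invT (η (ψ e) (ψ a)) * η (ψ e) (ψ a)) * ψ (θ a b) = ψ (θ a b) := by
      have hkey := pe_keyM invS hinv1S hinvcommS hcentralS θ P1S hEinvS a b
      rw [← he_def] at hkey
      have h2 := congrArg ψ hkey
      rw [map_mul ψ (invS (θ e a) * θ e a) (θ a b),
        map_mul ψ (invS (θ e a)) (θ e a), hinvψ (θ e a), hψx] at h2
      exact h2
    have hFQ : (invT (η (ψ e) (ψ a)) * η (ψ e) (ψ a)) * η (ψ a) (ψ b) = η (ψ a) (ψ b) := by
      have hkeyT := pe_keyM invT hinv1T hinvcommT hcentralT η P1T hEinvT (ψ a) (ψ b)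
      rwa [← hψe] at hkeyT
    calc ψ (θ a b)
        = (invT (η (ψ e) (ψ a)) * η (ψ e) (ψ a)) * ψ (θ a b) := hFP.symm
    _ = invT (η (ψ e) (ψ a)) * (η (ψ e) (ψ a) * ψ (θ a b)) := by simp only [mul_assoc]
    _ = invT (η (ψ e) (ψ a)) * (η (ψ e) (ψ a) * η (ψ a) (ψ b)) := by rw [hXPQ]
    _ = (invT (η (ψ e) (ψ a)) * η (ψ e) (ψ a)) * η (ψ a) (ψ b) := by
          simp only [mul_assoc]
    _ = η (ψ a) (ψ b) := hFQ
end

section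
/- Let S be a Clifford semigroup and s an idempotent-fixed solution on S. Then θ_e = θ_e ∘ θ_{a·e} for every a ∈ S and every e ∈ E(S); in particular θ_e ∘ θ_e = θ_e, i.e. θ_e is an idempotent map. -/
/- Clifford semigroup: semigroup with inversion `inv` such that
`a * inv a * a = a`, `inv a * a * inv a = inv a`, `a * inv a = inv a * a`,
and every idempotent is central.
A solution of the pentagon equation is given by `θ` satisfying (P1) and (P2). -/
theorem pentagon_clifford_idempotent_fixed_theta_e_idem
    {S : Type*} [Semigroup S] (inv : S → S)
    (hinv1 : ∀ a : S, a * inv a * a = a)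
    (hinv2 : ∀ a : S, inv a * a * inv a = inv a)
    (hinvcomm : ∀ a : S, a * inv a = inv a * a)
    (hcentral : ∀ e : S, e * e = e → ∀ a : S, e * a = a * e)
    (θ : S → S → S)
    (P1 : ∀ a b c : S, θ a b * θ (a * b) c = θ a (b * c))
    (P2 : ∀ a b c : S, θ (θ a b) (θ (a * b) c) = θ b c)
    (hEfix : ∀ a e : S, e * e = e → θ a e = e) :
    (∀ a e : S, e * e = e → θ e = θ e ∘ θ (a * e)) ∧
    (∀ e : S, e * e = e → θ e ∘ θ e = θ e) := by
  have key : ∀ a e : S, e * e = e → θ e = θ e ∘ θ (a * e) := by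
    intro a e he
    funext c
    have h := P2 a e c
    rw [hEfix a e he] at h
    exact h.symm
  refine ⟨key, fun e he => ?_⟩
  have h := key e e he
  rw [he] at h
  exact h.symm
end

section
/- Let S be a Clifford semigroup and s an idempotent-fixed solution on S. Then for all a,b ∈ S: θ_a(b) = b·b⁻¹·θ_a(b), θ_a(b)·(θ_a(b))⁻¹ = b·b⁻¹, and θ_a(b) = θ_{a·b·b⁻¹}(b). -/
/- Clifford semigroup: semigroup with inversion `inv` such that
`a * inv a * a = a`, `inv a * a * inv a = inv a`, `a * inv a = inv a * a`,
and every idempotent is central.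
A solution of the pentagon equation is given by `θ` satisfying (P1) and (P2). -/
theorem pentagon_clifford_idempotent_fixed_theta_properties
    {S : Type*} [Semigroup S] (inv : S → S)
    (hinv1 : ∀ a : S, a * inv a * a = a)
    (hinv2 : ∀ a : S, inv a * a * inv a = inv a)
    (hinvcomm : ∀ a : S, a * inv a = inv a * a)
    (hcentral : ∀ e : S, e * e = e → ∀ a : S, e * a = a * e)
    (θ : S → S → S)
    (P1 : ∀ a b c : S, θ a b * θ (a * b) c = θ a (b * c))
    (P2 : ∀ a b c : S, θ (θ a b) (θ (a * b) c) = θ b c)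
    (hEfix : ∀ a e : S, e * e = e → θ a e = e) :
    ∀ a b : S,
      θ a b = b * inv b * θ a b ∧
      θ a b * inv (θ a b) = b * inv b ∧
      θ a b = θ (a * (b * inv b)) b := by
  -- idempotency of b * inv b
  have he : ∀ b : S, (b * inv b) * (b * inv b) = b * inv b := by
    intro b
    rw [mul_assoc, ← mul_assoc (inv b), hinv2]
  have heb : ∀ b : S, (b * inv b) * b = b := fun b => hinv1 b
  have hbe : ∀ b : S, b * (b * inv b) = b := by
    intro b
    rw [hinvcomm, ← mul_assoc, hinv1]
  -- claim 1 (general form)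
  have claim1 : ∀ a b : S, (b * inv b) * θ a b = θ a b := by
    intro a b
    have hA : θ a b * (b * inv b) = θ a b := by
      have := P1 a b (b * inv b)
      rw [hbe, hEfix (a * b) (b * inv b) (he b)] at this
      exact this
    rw [hcentral (b * inv b) (he b) (θ a b), hA]
  intro a b
  refine ⟨(claim1 a b).symm, ?_, ?_⟩
  · -- claim 2
    have htx : (θ a b) * θ (a * b) (inv b) = b * inv b := by
      have := P1 a b (inv b)
      rw [hEfix a (b * inv b) (he b)] at this
      exact this
    have hfe : ((θ a b) * inv (θ a b)) * (b * inv b) = b * inv b := by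
      rw [← htx, ← mul_assoc, hinv1]
    have hef : (θ a b) * inv (θ a b) = (b * inv b) * ((θ a b) * inv (θ a b)) := by
      calc θ a b * inv (θ a b) = ((b * inv b) * θ a b) * inv (θ a b) := by
            rw [claim1]
        _ = (b * inv b) * ((θ a b) * inv (θ a b)) := mul_assoc _ _ _
    rw [hef, hcentral (b * inv b) (he b) ((θ a b) * inv (θ a b)), hfe]
  · -- claim 3
    have hB : (b * inv b) * θ (a * (b * inv b)) b = θ a b := by
      have := P1 a (b * inv b) b
      rw [heb, hEfix a (b * inv b) (he b)] at this
      exact this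
    rw [← hB, claim1]
end

section
/- Let S be a Clifford semigroup, and for each idempotent e ∈ E(S) let G_e = {x ∈ S : x·x⁻¹ = e} (a group with identity e). Suppose that for every e ∈ E(S) there is a family of maps θ^[e]_a (a ∈ G_e) with θ^[e]_a(G_e) ⊆ G_e which forms a solution on the group G_e, i.e. θ^[e]_a(b)·θ^[e]_{a·b}(c) = θ^[e]_a(b·c) and θ^[e]_{θ^[e]_a(b)}(θ^[e]_{a·b}(c)) = θ^[e]_b(c) for all a,b,c ∈ G_e. Suppose further that for all e,f ∈ E(S) there are maps ε_{e,f} : G_e → G_f such that ε_{e,f}(a) = f·a whenever f = e·f, and that for all e,f,h ∈ E(S), a ∈ G_e, b ∈ G_f, the following hold: (1) θ^[h]_{ε_{e·f,h}(a·b)}(c) = θ^[h]_{ε_{e,h}(a)·ε_{f,h}(b)}(c) for all c ∈ G_h, and (2) ε_{f,h}(θ^[f]_{ε_{e,f}(a)}(b)) = θ^[h]_{ε_{e,h}(a)}(ε_{f,h}(b)). Define θ_a(b) := θ^[f]_{ε_{e,f}(a)}(b) for a ∈ G_e and b ∈ G_f (i.e. with e = a·a⁻¹ and f = b·b⁻¹).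 Then the maps θ_a define a solution s(a,b) = (a·b, θ_a(b)) on S which is idempotent-fixed, i.e. θ_a(g) = g for every a ∈ S and every idempotent g of S. -/
set_option linter.unusedSectionVars false
set_option maxHeartbeats 1000000

section CliffordAux
variable {S : Type*} [Semigroup S] (inv : S → S)
    (hinv1 : ∀ a : S, a * inv a * a = a)
    (hinv2 : ∀ a : S, inv a * a * inv a = inv a)
    (hinvcomm : ∀ a : S, a * inv a = inv a * a)
    (hcentral : ∀ e : S, e * e = e → ∀ a : S, e * a = a * e)

include hinv1 hinv2 hinvcomm hcentral

theorem clifford_idemE (a : S) : (a * inv a) * (a * inv a) = a * inv a := by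
  have h2 : inv a * (a * inv a) = inv a := by rw [← mul_assoc, hinv2]
  rw [mul_assoc, h2]

theorem clifford_inv_unique (a x : S) (hx1 : a * x * a = a) (hx2 : x * a * x = x)
    (hx3 : a * x = x * a) : x = inv a := by
  have hx2' : x * (a * x) = x := by rw [← mul_assoc, hx2]
  have ha2' : inv a * (a * inv a) = inv a := by rw [← mul_assoc, hinv2]
  have he : (a * x) * (a * x) = a * x := by rw [mul_assoc, hx2']
  have hf : (a * inv a) * (a * inv a) = a * inv a :=
    clifford_idemE inv hinv1 hinv2 hinvcomm hcentral a
  have cf := hcentral _ hf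
  have hef : a * x = a * inv a := by
    calc a * x = (a * inv a) * (a * x) := by rw [← mul_assoc, hinv1]
    _ = (a * x) * (a * inv a) := cf _
    _ = a * inv a := by rw [← mul_assoc, hx1]
  have hxa : x = (a * inv a) * inv a := by
    calc x = x * (a * x) := hx2'.symm
    _ = x * (a * inv a) := by rw [hef]
    _ = (x * a) * inv a := by rw [mul_assoc]
    _ = (a * x) * inv a := by rw [hx3]
    _ = (a * inv a) * inv a := by rw [hef]
  have hia : inv a = (a * inv a) * x := by
    calc inv a = inv a * (a * inv a) := ha2'.symm
    _ = inv a * (a * x) := by rw [hef]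
    _ = (inv a * a) * x := by rw [mul_assoc]
    _ = (a * inv a) * x := by rw [hinvcomm]
  calc x = (a * inv a) * inv a := hxa
  _ = (a * inv a) * ((a * inv a) * x) := by rw [← hia]
  _ = ((a * inv a) * (a * inv a)) * x := by rw [← mul_assoc]
  _ = (a * inv a) * x := by rw [hf]
  _ = inv a := hia.symm

theorem clifford_inv_idem (g : S) (hg : g * g = g) : g * inv g = g := by
  have : g = inv g := clifford_inv_unique inv hinv1 hinv2 hinvcomm hcentral g g
    (by rw [hg, hg]) (by rw [hg, hg]) rfl
  rw [← this, hg]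

theorem clifford_e_mul (a b : S) :
    (a * b) * inv (a * b) = (a * inv a) * (b * inv b) := by
  have he := clifford_idemE inv hinv1 hinv2 hinvcomm hcentral a
  have hf := clifford_idemE inv hinv1 hinv2 hinvcomm hcentral b
  have ce := hcentral _ he
  have cf := hcentral _ hf
  have hP : (a * b) * (inv b * inv a) = (a * inv a) * (b * inv b) := by
    calc (a * b) * (inv b * inv a) = a * ((b * inv b) * inv a) := by
          rw [mul_assoc, ← mul_assoc b]
    _ = a * (inv a * (b * inv b)) := by rw [cf]
    _ = (a * inv a) * (b * inv b) := by rw [← mul_assoc]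
  have hQ : (inv b * inv a) * (a * b) = (a * inv a) * (b * inv b) := by
    calc (inv b * inv a) * (a * b) = inv b * ((inv a * a) * b) := by
          rw [mul_assoc, ← mul_assoc (inv a)]
    _ = inv b * ((a * inv a) * b) := by rw [← hinvcomm]
    _ = inv b * (b * (a * inv a)) := by rw [ce]
    _ = (inv b * b) * (a * inv a) := by rw [← mul_assoc]
    _ = (b * inv b) * (a * inv a) := by rw [← hinvcomm]
    _ = (a * inv a) * (b * inv b) := (ce _).symm
  have hfab : (a * inv a) * ((b * inv b) * (a * b)) = a * b := by
    have hfb : (b * inv b) * b = b := hinv1 b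
    have hea : (a * inv a) * a = a := hinv1 a
    calc (a * inv a) * ((b * inv b) * (a * b))
        = (a * inv a) * ((a * b) * (b * inv b)) := by rw [cf]
    _ = (a * inv a) * (a * ((b * inv b) * b)) := by rw [mul_assoc a b, ← cf b]
    _ = (a * inv a) * (a * b) := by rw [hfb]
    _ = ((a * inv a) * a) * b := by rw [← mul_assoc]
    _ = a * b := by rw [hea]
  have c1 : (a * b) * (inv b * inv a) * (a * b) = a * b := by
    rw [hP, mul_assoc, hfab]
  have c2 : (inv b * inv a) * (a * b) * (inv b * inv a) = inv b * inv a := by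
    have h1' : (a * inv a) * inv a = inv a := by rw [hinvcomm, hinv2]
    have h2' : (b * inv b) * inv b = inv b := by rw [hinvcomm, hinv2]
    rw [hQ]
    calc (a * inv a) * (b * inv b) * (inv b * inv a)
        = (a * inv a) * ((b * inv b) * inv b * inv a) := by
          rw [mul_assoc, ← mul_assoc (b * inv b)]
    _ = (a * inv a) * (inv b * inv a) := by rw [h2']
    _ = inv b * ((a * inv a) * inv a) := by rw [← mul_assoc, ce, mul_assoc]
    _ = inv b * inv a := by rw [h1']
  have c3 : (a * b) * (inv b * inv a) = (inv b * inv a) * (a * b) := by rw [hP, hQ]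
  have := clifford_inv_unique inv hinv1 hinv2 hinvcomm hcentral (a * b)
    (inv b * inv a) c1 c2 c3
  rw [← this, hP]

omit hinv1 hinv2 hinvcomm in
theorem clifford_idem_prod (e f : S) (he : e * e = e) (hf : f * f = f) :
    (e * f) * (e * f) = e * f := by
  have ce := hcentral e he
  calc (e * f) * (e * f) = e * ((f * e) * f) := by rw [mul_assoc, ← mul_assoc f]
  _ = e * ((e * f) * f) := by rw [← ce]
  _ = e * (e * (f * f)) := by rw [mul_assoc]
  _ = (e * e) * (f * f) := by rw [← mul_assoc]
  _ = e * f := by rw [he, hf]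

omit hinv1 hinv2 hinvcomm in
theorem clifford_kdistrib (k : S) (hk : k * k = k) (u v : S) :
    (k * u) * (k * v) = k * (u * v) := by
  have ck := hcentral k hk
  calc (k * u) * (k * v) = k * ((u * k) * v) := by rw [mul_assoc, ← mul_assoc u]
  _ = k * ((k * u) * v) := by rw [← ck]
  _ = k * (k * (u * v)) := by rw [mul_assoc]
  _ = (k * k) * (u * v) := by rw [← mul_assoc]
  _ = k * (u * v) := by rw [hk]

omit hinv2 hinvcomm hcentral in
theorem clifford_absorb (m w : S) (hw : m * inv m = w) : w * m = m := by
  rw [← hw]; exact hinv1 m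

end CliffordAux

theorem pentagon_clifford_idempotent_fixed_construction
    {S : Type*} [Semigroup S] (inv : S → S)
    (hinv1 : ∀ a : S, a * inv a * a = a)
    (hinv2 : ∀ a : S, inv a * a * inv a = inv a)
    (hinvcomm : ∀ a : S, a * inv a = inv a * a)
    (hcentral : ∀ e : S, e * e = e → ∀ a : S, e * a = a * e)
    -- the family of solutions on the groups `G_e = {x | x * inv x = e}`:
    -- `θG a b` stands for `θ^[e]_a(b)` where `e = a * inv a` and `b ∈ G_e`
    (θG : S → S → S)
    (hGmem : ∀ a b : S, b * inv b = a * inv a → θG a b * inv (θG a b) = a * inv a)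
    (hGP1 : ∀ e : S, e * e = e → ∀ a b c : S,
      a * inv a = e → b * inv b = e → c * inv c = e →
      θG a b * θG (a * b) c = θG a (b * c))
    (hGP2 : ∀ e : S, e * e = e → ∀ a b c : S,
      a * inv a = e → b * inv b = e → c * inv c = e →
      θG (θG a b) (θG (a * b) c) = θG b c)
    -- the connecting maps `ε e f : G_e → G_f`
    (ε : S → S → S → S)
    (hεmem : ∀ e f : S, e * e = e → f * f = f →
      ∀ a : S, a * inv a = e → ε e f a * inv (ε e f a) = f)
    (hεφ : ∀ e f : S, e * e = e → f * f = f → f = e * f →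
      ∀ a : S, a * inv a = e → ε e f a = f * a)
    (h1 : ∀ e f h : S, e * e = e → f * f = f → h * h = h →
      ∀ a b : S, a * inv a = e → b * inv b = f → ∀ c : S, c * inv c = h →
      θG (ε (e * f) h (a * b)) c = θG (ε e h a * ε f h b) c)
    (h2 : ∀ e f h : S, e * e = e → f * f = f → h * h = h →
      ∀ a b : S, a * inv a = e → b * inv b = f →
      ε f h (θG (ε e f a) b) = θG (ε e h a) (ε f h b))
    -- the global map
    (θ : S → S → S)
    (hθ : ∀ a b : S, θ a b = θG (ε (a * inv a) (b * inv b) a) b) :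
    (∀ a b c : S, θ a b * θ (a * b) c = θ a (b * c)) ∧
    (∀ a b c : S, θ (θ a b) (θ (a * b) c) = θ b c) ∧
    (∀ a g : S, g * g = g → θ a g = g) := by
  have idem : ∀ a : S, (a * inv a) * (a * inv a) = a * inv a :=
    clifford_idemE inv hinv1 hinv2 hinvcomm hcentral
  have emul : ∀ a b : S, (a * b) * inv (a * b) = (a * inv a) * (b * inv b) :=
    clifford_e_mul inv hinv1 hinv2 hinvcomm hcentral
  have gidem : ∀ g : S, g * g = g → g * inv g = g :=
    clifford_inv_idem inv hinv1 hinv2 hinvcomm hcentral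
  have iprod : ∀ e f : S, e * e = e → f * f = f → (e * f) * (e * f) = e * f :=
    fun e f he hf => clifford_idem_prod hcentral e f he hf
  have kdist : ∀ k : S, k * k = k → ∀ u v : S, (k * u) * (k * v) = k * (u * v) :=
    fun k hk => clifford_kdistrib hcentral k hk
  have habs : ∀ m w : S, m * inv m = w → w * m = m :=
    fun m w hw => clifford_absorb inv hinv1 m w hw
  refine ⟨?_, ?_, ?_⟩
  · -- (P1)
    intro a b c
    set e := a * inv a with hE
    set f := b * inv b with hF
    set h := c * inv c with hH
    have he : e * e = e := idem a
    have hf : f * f = f := idem b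
    have hh : h * h = h := idem c
    have hef : (e * f) * (e * f) = e * f := iprod e f he hf
    have hk : (f * h) * (f * h) = f * h := iprod f h hf hh
    have hab : (a * b) * inv (a * b) = e * f := emul a b
    have hbc : (b * c) * inv (b * c) = f * h := emul b c
    have hffh : f * h = f * (f * h) := by rw [← mul_assoc f f h, hf]
    have hhfh : f * h = h * (f * h) := by
      rw [← mul_assoc h f h, hcentral h hh f, mul_assoc f h h, hh]
    have hu : θ a b = θG (ε e f a) b := hθ a b
    have hv : θ (a * b) c = θG (ε (e * f) h (a * b)) c := by rw [hθ, hab]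
    have humem : θ a b * inv (θ a b) = f := by
      rw [hu, hGmem _ b (hεmem e f he hf a rfl).symm, hεmem e f he hf a rfl]
    have hvmem : θ (a * b) c * inv (θ (a * b) c) = h := by
      rw [hv, hGmem _ c (hεmem (e * f) h hef hh (a * b) hab).symm,
        hεmem (e * f) h hef hh (a * b) hab]
    have huvmem : (θ a b * θ (a * b) c) * inv (θ a b * θ (a * b) c) = f * h := by
      rw [emul, humem, hvmem]
    calc θ a b * θ (a * b) c
        = (f * h) * (θ a b * θ (a * b) c) := (habs _ _ huvmem).symm
    _ = ((f * h) * θ a b) * ((f * h) * θ (a * b) c) := (kdist (f * h) hk _ _).symm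
    _ = ε f (f * h) (θ a b) * ε h (f * h) (θ (a * b) c) := by
        rw [hεφ f (f * h) hf hk hffh (θ a b) humem,
          hεφ h (f * h) hh hk hhfh (θ (a * b) c) hvmem]
    _ = θG (ε e (f * h) a) (ε f (f * h) b) *
          θG (ε (e * f) (f * h) (a * b)) (ε h (f * h) c) := by
        rw [hu, hv, h2 e f (f * h) he hf hk a b rfl rfl,
          h2 (e * f) h (f * h) hef hh hk (a * b) c hab rfl]
    _ = θG (ε e (f * h) a) (ε f (f * h) b) *
          θG (ε e (f * h) a * ε f (f * h) b) (ε h (f * h) c) := by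
        rw [h1 e f (f * h) he hf hk a b rfl rfl (ε h (f * h) c)
          (hεmem h (f * h) hh hk c rfl)]
    _ = θG (ε e (f * h) a) (ε f (f * h) b * ε h (f * h) c) :=
        hGP1 (f * h) hk _ _ _ (hεmem e (f * h) he hk a rfl)
          (hεmem f (f * h) hf hk b rfl) (hεmem h (f * h) hh hk c rfl)
    _ = θG (ε e (f * h) a) (((f * h) * b) * ((f * h) * c)) := by
        rw [hεφ f (f * h) hf hk hffh b rfl, hεφ h (f * h) hh hk hhfh c rfl]
    _ = θG (ε e (f * h) a) ((f * h) * (b * c)) := by rw [kdist (f * h) hk b c]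
    _ = θG (ε e (f * h) a) (b * c) := by rw [habs (b * c) (f * h) hbc]
    _ = θ a (b * c) := by rw [hθ a (b * c), hbc, ← hE]
  · -- (P2)
    intro a b c
    set e := a * inv a with hE
    set f := b * inv b with hF
    set h := c * inv c with hH
    have he : e * e = e := idem a
    have hf : f * f = f := idem b
    have hh : h * h = h := idem c
    have hef : (e * f) * (e * f) = e * f := iprod e f he hf
    have hab : (a * b) * inv (a * b) = e * f := emul a b
    have hu : θ a b = θG (ε e f a) b := hθ a b
    have hv : θ (a * b) c = θG (ε (e * f) h (a * b)) c := by rw [hθ, hab]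
    have humem : θ a b * inv (θ a b) = f := by
      rw [hu, hGmem _ b (hεmem e f he hf a rfl).symm, hεmem e f he hf a rfl]
    have hvmem : θ (a * b) c * inv (θ (a * b) c) = h := by
      rw [hv, hGmem _ c (hεmem (e * f) h hef hh (a * b) hab).symm,
        hεmem (e * f) h hef hh (a * b) hab]
    rw [hθ (θ a b) (θ (a * b) c), humem, hvmem, hu, hv,
      h2 e f h he hf hh a b rfl rfl,
      h1 e f h he hf hh a b rfl rfl c rfl,
      hGP2 h hh (ε e h a) (ε f h b) c (hεmem e h he hh a rfl)
        (hεmem f h hf hh b rfl) rfl,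
      hθ b c, ← hF, ← hH]
  · -- idempotent-fixed
    intro a g hg
    have hgi : g * inv g = g := gidem g hg
    have he : (a * inv a) * (a * inv a) = a * inv a := idem a
    have hx : ε (a * inv a) g a * inv (ε (a * inv a) g a) = g :=
      hεmem (a * inv a) g he hg a rfl
    have hxg : ε (a * inv a) g a * g = ε (a * inv a) g a := by
      rw [← hcentral g hg]
      exact habs _ _ hx
    have key := hGP1 g hg (ε (a * inv a) g a) g g hx (by rw [hgi]) (by rw [hgi])
    rw [hxg, hg] at key
    have humem : θG (ε (a * inv a) g a) g * inv (θG (ε (a * inv a) g a) g) = g := by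
      rw [hGmem (ε (a * inv a) g a) g (by rw [hgi, hx]), hx]
    have hidem := gidem (θG (ε (a * inv a) g a) g) key
    rw [hθ, hgi]
    exact hidem.symm.trans humem
end
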